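/- arXiv:1203.0477 — 4 statements merged into one kernel-verified Lean document; each statement's English description precedes it below -/
import Mathlib

section
/- Let β ∈ (0, 1). There exists a constant C > 0 such that for every x > 0 and every ε > 0, ∫_ℝ |x + ε y|^{−β} dγ(y) ≤ C · min(ε^{−β}, x^{−β}), where γ is the standard Gaussian measure on ℝ. -/
open MeasureTheory ProbabilityTheory
open Real Set

lemma K1 {β : ℝ} (hβ0 : 0 < β) (hβ1 : β < 1) :
    ∫⁻ u in Icc (0:ℝ) 1, ENNReal.ofReal (u ^ (-β)) ≤ ENNReal.ofReal ((1-β)⁻¹) := by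
  have hint : IntegrableOn (fun u : ℝ => u ^ (-β)) (Ioc (0:ℝ) 1) := by
    have := intervalIntegral.intervalIntegrable_rpow' (a := 0) (b := 1) (r := -β)
      (by linarith)
    rwa [intervalIntegrable_iff_integrableOn_Ioc_of_le (by norm_num)] at this
  have h0 : volume.restrict (Icc (0:ℝ) 1) = volume.restrict (Ioc (0:ℝ) 1) :=
    Measure.restrict_congr_set Ioc_ae_eq_Icc.symm
  rw [show (∫⁻ u in Icc (0:ℝ) 1, ENNReal.ofReal (u ^ (-β)))
      = ∫⁻ u in Ioc (0:ℝ) 1, ENNReal.ofReal (u ^ (-β)) by rw [h0]]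
  rw [← ofReal_integral_eq_lintegral_ofReal hint
    (by filter_upwards [ae_restrict_mem measurableSet_Ioc] with u hu using
      Real.rpow_nonneg hu.1.le _)]
  have h2 : ∫ u in Ioc (0:ℝ) 1, u ^ (-β) = ∫ u in (0:ℝ)..1, u ^ (-β) :=
    (intervalIntegral.integral_of_le (by norm_num)).symm
  rw [h2, integral_rpow (Or.inl (by linarith))]
  rw [Real.zero_rpow (by linarith : -β + 1 ≠ 0), Real.one_rpow]
  apply ENNReal.ofReal_le_ofReal
  rw [show -β + 1 = 1 - β by ring]
  simp

lemma K2 {β : ℝ} (hβ0 : 0 < β) (hβ1 : β < 1) :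
    ∫⁻ u in Icc (-1:ℝ) 1, ENNReal.ofReal (|u| ^ (-β)) ≤ ENNReal.ofReal (2 * (1-β)⁻¹) := by
  have hg : Measurable fun u : ℝ => ENNReal.ofReal (|u| ^ (-β)) := by fun_prop
  have hhalf : ∫⁻ u in Icc (0:ℝ) 1, ENNReal.ofReal (|u| ^ (-β))
      ≤ ENNReal.ofReal ((1-β)⁻¹) := by
    rw [setLIntegral_congr_fun measurableSet_Icc
      (fun u (hu : u ∈ Icc (0:ℝ) 1) => by rw [abs_of_nonneg hu.1])]
    exact K1 hβ0 hβ1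
  have hneg : ∫⁻ u in Icc (-1:ℝ) 0, ENNReal.ofReal (|u| ^ (-β))
      = ∫⁻ u in Icc (0:ℝ) 1, ENNReal.ofReal (|u| ^ (-β)) := by
    rw [← lintegral_indicator measurableSet_Icc, ← lintegral_indicator measurableSet_Icc]
    have : ∫⁻ u, (Icc (-1:ℝ) 0).indicator (fun u => ENNReal.ofReal (|u| ^ (-β))) u
        = ∫⁻ u, (Icc (-1:ℝ) 0).indicator (fun u => ENNReal.ofReal (|u| ^ (-β))) (-u) := by
      conv_lhs => rw [← Measure.map_neg_eq_self (volume : Measure ℝ)]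
      rw [lintegral_map (hg.indicator measurableSet_Icc) measurable_neg]
    rw [this]
    congr 1
    ext u
    rw [Set.indicator_apply, Set.indicator_apply]
    have hmem : (-u ∈ Icc (-1:ℝ) 0) ↔ u ∈ Icc (0:ℝ) 1 := by
      simp [neg_le, le_neg]; constructor <;> intro h <;> exact ⟨h.2, h.1⟩
    by_cases h : u ∈ Icc (0:ℝ) 1
    · rw [if_pos (hmem.mpr h), if_pos h, abs_neg]
    · rw [if_neg (fun hc => h (hmem.mp hc)), if_neg h]
  have hsub : Icc (-1:ℝ) 1 ⊆ Icc (-1:ℝ) 0 ∪ Icc (0:ℝ) 1 := by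
    intro u hu
    rcases le_or_gt u 0 with h | h
    · exact Or.inl ⟨hu.1, h⟩
    · exact Or.inr ⟨h.le, hu.2⟩
  calc ∫⁻ u in Icc (-1:ℝ) 1, ENNReal.ofReal (|u| ^ (-β))
      ≤ ∫⁻ u in Icc (-1:ℝ) 0 ∪ Icc (0:ℝ) 1, ENNReal.ofReal (|u| ^ (-β)) :=
        lintegral_mono_set hsub
    _ ≤ (∫⁻ u in Icc (-1:ℝ) 0, ENNReal.ofReal (|u| ^ (-β)))
        + ∫⁻ u in Icc (0:ℝ) 1, ENNReal.ofReal (|u| ^ (-β)) := lintegral_union_le _ _ _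
    _ ≤ ENNReal.ofReal ((1-β)⁻¹) + ENNReal.ofReal ((1-β)⁻¹) := by
        rw [hneg]; exact add_le_add hhalf hhalf
    _ = ENNReal.ofReal (2 * (1-β)⁻¹) := by
        rw [← ENNReal.ofReal_add (by simp [inv_nonneg]; linarith) (by simp [inv_nonneg]; linarith)]; ring_nf

lemma T {β : ℝ} (a : ℝ) :
    ∫⁻ y, ({y : ℝ | |a + y| ≤ 1}).indicator
        (fun y => ENNReal.ofReal (|a + y| ^ (-β))) y
      = ∫⁻ u in Icc (-1:ℝ) 1, ENNReal.ofReal (|u| ^ (-β)) := by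
  rw [← lintegral_indicator measurableSet_Icc]
  rw [← lintegral_add_left_eq_self
    (fun u => (Icc (-1:ℝ) 1).indicator (fun u => ENNReal.ofReal (|u| ^ (-β))) u) a]
  congr 1; ext y
  rw [Set.indicator_apply, Set.indicator_apply]
  have : a + y ∈ Icc (-1:ℝ) 1 ↔ y ∈ {y : ℝ | |a + y| ≤ 1} := by
    simp [mem_Icc, abs_le, mem_setOf_eq]
  by_cases h : y ∈ {y : ℝ | |a + y| ≤ 1}
  · rw [if_pos (this.mpr h), if_pos h]
  · rw [if_neg (fun hc => h (this.mp hc)), if_neg h]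

lemma pdf_le (y : ℝ) : gaussianPDF 0 1 y ≤ ENNReal.ofReal (rexp (-(y^2)/2)) := by
  unfold gaussianPDF gaussianPDFReal
  apply ENNReal.ofReal_le_ofReal
  have h1 : (1:ℝ) ≤ √(2*π*(1:NNReal)) := by
    rw [show ((2:ℝ)*π*(1:NNReal)) = 2*π by push_cast; ring]
    nlinarith [Real.sq_sqrt (by positivity : (0:ℝ) ≤ 2*π), Real.sqrt_nonneg (2*π),
      Real.pi_gt_three]
  calc (√(2*π*(1:NNReal)))⁻¹ * rexp (-(y-0)^2/(2*(1:NNReal)))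
      ≤ 1 * rexp (-(y-0)^2/(2*(1:NNReal))) := by
        have := inv_le_one_of_one_le₀ h1
        nlinarith [Real.exp_pos (-(y-0)^2/(2*(1:NNReal))),
          inv_nonneg.mpr (le_trans zero_le_one h1)]
    _ = rexp (-(y^2)/2) := by push_cast; ring_nf

lemma exp_neg_le_inv {t : ℝ} (ht : 0 < t) : rexp (-t) ≤ t⁻¹ := by
  rw [Real.exp_neg]
  exact inv_anti₀ ht (by linarith [Real.add_one_le_exp t])

lemma G_bound {β : ℝ} (hβ0 : 0 < β) (hβ1 : β < 1) {a : ℝ} (ha : 0 < a) :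
    ∫⁻ y, ENNReal.ofReal (|a + y| ^ (-β)) ∂(gaussianReal 0 1) ≤
      ENNReal.ofReal (100/(1-β) * min 1 (a ^ (-β))) := by
  have h1β : (0:ℝ) < 1 - β := by linarith
  have hinv1 : (1:ℝ) ≤ (1-β)⁻¹ := by
    rw [le_inv_comm₀ one_pos h1β]; linarith
  have hmf : Measurable fun y : ℝ => ENNReal.ofReal (|a + y| ^ (-β)) := by fun_prop
  set F := fun y : ℝ => ({y : ℝ | |a + y| ≤ 1}).indicator
      (fun y => ENNReal.ofReal (|a + y| ^ (-β))) y with hFdef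
  have hSm : MeasurableSet {y : ℝ | |a + y| ≤ 1} :=
    measurableSet_le (by fun_prop) measurable_const
  have hF : Measurable F := hmf.indicator hSm
  have hFint : ∫⁻ y, F y ≤ ENNReal.ofReal (2 * (1-β)⁻¹) := le_of_le_of_eq (le_of_eq (T a)) rfl |>.trans (K2 hβ0 hβ1)
  rw [gaussianReal_of_var_ne_zero 0 one_ne_zero,
    lintegral_withDensity_eq_lintegral_mul _ (measurable_gaussianPDF 0 1) hmf]
  simp only [Pi.mul_apply]
  rcases le_or_gt a 1 with h1 | h1
  · -- small a : min = 1
    have hmin : min 1 (a ^ (-β)) = 1 :=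
      min_eq_left (Real.one_le_rpow_of_pos_of_le_one_of_nonpos ha h1 (by linarith))
    rw [hmin, mul_one]
    have hpt : ∀ y, gaussianPDF 0 1 y * ENNReal.ofReal (|a + y| ^ (-β))
        ≤ F y + gaussianPDF 0 1 y := by
      intro y
      by_cases hy : |a + y| ≤ 1
      · have h2 : gaussianPDF 0 1 y ≤ 1 := by
          refine (pdf_le y).trans ?_
          rw [← ENNReal.ofReal_one]
          exact ENNReal.ofReal_le_ofReal (by
            rw [Real.exp_le_one_iff]; nlinarith [sq_nonneg y])
        calc gaussianPDF 0 1 y * ENNReal.ofReal (|a + y| ^ (-β))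
            ≤ 1 * ENNReal.ofReal (|a + y| ^ (-β)) := by gcongr
          _ = F y := by rw [one_mul]; exact (Set.indicator_of_mem (show y ∈ {y : ℝ | |a + y| ≤ 1} from hy) (fun y => ENNReal.ofReal (|a + y| ^ (-β)))).symm
          _ ≤ F y + gaussianPDF 0 1 y := le_self_add
      · have h3 : ENNReal.ofReal (|a + y| ^ (-β)) ≤ 1 := by
          rw [← ENNReal.ofReal_one]
          exact ENNReal.ofReal_le_ofReal
            (Real.rpow_le_one_of_one_le_of_nonpos (le_of_not_ge hy) (by linarith))
        calc gaussianPDF 0 1 y * ENNReal.ofReal (|a + y| ^ (-β))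
            ≤ gaussianPDF 0 1 y * 1 := by gcongr
          _ = gaussianPDF 0 1 y := mul_one _
          _ ≤ F y + gaussianPDF 0 1 y := le_add_self
    calc ∫⁻ y, gaussianPDF 0 1 y * ENNReal.ofReal (|a + y| ^ (-β))
        ≤ ∫⁻ y, (F y + gaussianPDF 0 1 y) := lintegral_mono hpt
      _ = (∫⁻ y, F y) + ∫⁻ y, gaussianPDF 0 1 y :=
          lintegral_add_left hF _
      _ ≤ ENNReal.ofReal (2 * (1-β)⁻¹) + 1 := by
          rw [lintegral_gaussianPDF_eq_one 0 one_ne_zero]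
          exact add_le_add_left hFint 1
      _ ≤ ENNReal.ofReal (100/(1-β)) := by
          rw [← ENNReal.ofReal_one,
            ← ENNReal.ofReal_add (by positivity) zero_le_one]
          apply ENNReal.ofReal_le_ofReal
          rw [div_eq_mul_inv]
          nlinarith
  · -- large a : min = a ^ (-β)
    have hmin : min 1 (a ^ (-β)) = a ^ (-β) :=
      min_eq_right (Real.rpow_le_one_of_one_le_of_nonpos h1.le (by linarith))
    rw [hmin]
    have hanb : (0:ℝ) ≤ a ^ (-β) := Real.rpow_nonneg ha.le _
    have ha2 : (0:ℝ) < a^2 := by positivity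
    -- key real bounds
    have hb1 : (a/2) ^ (-β) ≤ 2 * a ^ (-β) := by
      rw [Real.div_rpow ha.le (by norm_num), div_le_iff₀ (by positivity)]
      calc a ^ (-β) = a ^ (-β) * 1 := (mul_one _).symm
        _ ≤ 2 * a ^ (-β) * (2:ℝ) ^ (-β) := by
            have h2b : (1:ℝ) ≤ 2 * (2:ℝ) ^ (-β) := by
              have : (2:ℝ) * (2:ℝ) ^ (-β) = (2:ℝ) ^ (1 - β) := by
                rw [Real.rpow_sub (by norm_num), Real.rpow_one,
                  Real.rpow_neg (by norm_num : (0:ℝ) ≤ 2), div_eq_mul_inv]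
              rw [this]
              exact Real.one_le_rpow (by norm_num) (by linarith)
            nlinarith
        _ = 2 * a ^ (-β) * (2:ℝ) ^ (-β) := rfl
    have ham : a ^ ((-2:ℝ)) ≤ a ^ (-β) :=
      Real.rpow_le_rpow_of_exponent_le h1.le (by linarith)
    have ham2 : (a^2)⁻¹ ≤ a ^ (-β) := by
      rw [show ((a:ℝ)^2)⁻¹ = a ^ ((-2:ℝ)) by
        rw [Real.rpow_neg ha.le, Real.rpow_two]] at *
      exact ham
    have hb2 : rexp (-(a^2/8)) ≤ 8 * a ^ (-β) := by
      calc rexp (-(a^2/8)) ≤ (a^2/8)⁻¹ := exp_neg_le_inv (by positivity)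
        _ = 8 * (a^2)⁻¹ := by field_simp
        _ ≤ 8 * a ^ (-β) := by linarith
    have hb3 : rexp (-(a^2/16)) ≤ 16 * a ^ (-β) := by
      calc rexp (-(a^2/16)) ≤ (a^2/16)⁻¹ := exp_neg_le_inv (by positivity)
        _ = 16 * (a^2)⁻¹ := by field_simp
        _ ≤ 16 * a ^ (-β) := by linarith
    -- pointwise bound
    have hpt : ∀ y, gaussianPDF 0 1 y * ENNReal.ofReal (|a + y| ^ (-β))
        ≤ ENNReal.ofReal ((a/2) ^ (-β)) * gaussianPDF 0 1 y
          + (ENNReal.ofReal (rexp (-(a^2/8))) * F y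
          + ENNReal.ofReal (rexp (-(a^2/16)) * rexp (-(1/4) * y^2))) := by
      intro y
      by_cases hy : -(a/2) ≤ y
      · have hpos : (0:ℝ) < a + y := by linarith
        have : ENNReal.ofReal (|a + y| ^ (-β)) ≤ ENNReal.ofReal ((a/2) ^ (-β)) := by
          apply ENNReal.ofReal_le_ofReal
          rw [abs_of_pos hpos]
          exact Real.rpow_le_rpow_of_nonpos (by positivity) (by linarith) (by linarith)
        calc gaussianPDF 0 1 y * ENNReal.ofReal (|a + y| ^ (-β))
            ≤ gaussianPDF 0 1 y * ENNReal.ofReal ((a/2) ^ (-β)) := by gcongr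
          _ = ENNReal.ofReal ((a/2) ^ (-β)) * gaussianPDF 0 1 y := mul_comm _ _
          _ ≤ _ := le_self_add
      · push_neg at hy
        have hy2 : a^2/4 ≤ y^2 := by nlinarith
        by_cases hz : |a + y| ≤ 1
        · have step : gaussianPDF 0 1 y ≤ ENNReal.ofReal (rexp (-(a^2/8))) := by
            refine (pdf_le y).trans (ENNReal.ofReal_le_ofReal ?_)
            apply Real.exp_le_exp.mpr; linarith
          calc gaussianPDF 0 1 y * ENNReal.ofReal (|a + y| ^ (-β))
              ≤ ENNReal.ofReal (rexp (-(a^2/8))) * ENNReal.ofReal (|a + y| ^ (-β)) := by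
                gcongr
            _ = ENNReal.ofReal (rexp (-(a^2/8))) * F y := by
                congr 1; exact (Set.indicator_of_mem (show y ∈ {y : ℝ | |a + y| ≤ 1} from hz) (fun y => ENNReal.ofReal (|a + y| ^ (-β)))).symm
            _ ≤ _ := le_self_add.trans le_add_self
        · push_neg at hz
          calc gaussianPDF 0 1 y * ENNReal.ofReal (|a + y| ^ (-β))
              ≤ gaussianPDF 0 1 y * 1 := by
                gcongr
                rw [← ENNReal.ofReal_one]
                exact ENNReal.ofReal_le_ofReal
                  (Real.rpow_le_one_of_one_le_of_nonpos hz.le (by linarith))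
            _ = gaussianPDF 0 1 y := mul_one _
            _ ≤ ENNReal.ofReal (rexp (-(a^2/16)) * rexp (-(1/4) * y^2)) := by
                refine (pdf_le y).trans (ENNReal.ofReal_le_ofReal ?_)
                rw [← Real.exp_add]
                apply Real.exp_le_exp.mpr; linarith
            _ ≤ _ := le_add_self.trans le_add_self
    calc ∫⁻ y, gaussianPDF 0 1 y * ENNReal.ofReal (|a + y| ^ (-β))
        ≤ ∫⁻ y, (ENNReal.ofReal ((a/2) ^ (-β)) * gaussianPDF 0 1 y
            + (ENNReal.ofReal (rexp (-(a^2/8))) * F y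
            + ENNReal.ofReal (rexp (-(a^2/16)) * rexp (-(1/4) * y^2)))) :=
          lintegral_mono hpt
      _ = ENNReal.ofReal ((a/2) ^ (-β)) * 1
          + (ENNReal.ofReal (rexp (-(a^2/8))) * (∫⁻ y, F y)
          + ENNReal.ofReal (rexp (-(a^2/16)))
            * (∫⁻ y, ENNReal.ofReal (rexp (-(1/4) * y^2)))) := by
          simp_rw [ENNReal.ofReal_mul (Real.exp_nonneg _)]
          rw [lintegral_add_left ((measurable_gaussianPDF 0 1).const_mul _),
            lintegral_add_left (hF.const_mul _),
            lintegral_const_mul _ (measurable_gaussianPDF 0 1),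
            lintegral_const_mul _ hF,
            lintegral_const_mul _
              (by fun_prop : Measurable fun y : ℝ => ENNReal.ofReal (rexp (-(1/4) * y^2))),
            lintegral_gaussianPDF_eq_one 0 one_ne_zero]
      _ ≤ ENNReal.ofReal ((a/2) ^ (-β)) * 1
          + (ENNReal.ofReal (rexp (-(a^2/8))) * ENNReal.ofReal (2*(1-β)⁻¹)
          + ENNReal.ofReal (rexp (-(a^2/16))) * ENNReal.ofReal 4) := by
          gcongr
          rw [← ofReal_integral_eq_lintegral_ofReal
            (integrable_exp_neg_mul_sq (by norm_num : (0:ℝ) < 1/4))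
            (ae_of_all _ fun y => (Real.exp_pos _).le)]
          apply ENNReal.ofReal_le_ofReal
          rw [integral_gaussian]
          calc √(π/(1/4)) ≤ √16 := Real.sqrt_le_sqrt (by nlinarith [Real.pi_le_four])
            _ = 4 := by
                rw [show (16:ℝ) = 4^2 by norm_num, Real.sqrt_sq (by norm_num : (0:ℝ) ≤ 4)]
      _ ≤ ENNReal.ofReal (100/(1-β) * a ^ (-β)) := by
          rw [mul_one, ← ENNReal.ofReal_mul (Real.exp_nonneg _),
            ← ENNReal.ofReal_mul (Real.exp_nonneg _),
            ← ENNReal.ofReal_add (by positivity) (by positivity),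
            ← ENNReal.ofReal_add (by positivity) (by positivity)]
          apply ENNReal.ofReal_le_ofReal
          rw [show (100:ℝ)/(1-β) = 100 * (1-β)⁻¹ from div_eq_mul_inv _ _]
          nlinarith [hb1, hb3, hanb, hinv1,
            mul_le_mul_of_nonneg_right hb2 (by positivity : (0:ℝ) ≤ 2*(1-β)⁻¹),
            mul_nonneg (sub_nonneg.mpr hinv1) hanb,
            mul_nonneg (inv_nonneg.mpr h1β.le) hanb]

/-- For `β ∈ (0,1)` there is a constant `C > 0` such that for all `x > 0`, `ε > 0`,
`E|x + ε X|^{-β} ≤ C min(ε^{-β}, x^{-β})` where `X` is standard Gaussian. -/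
theorem gaussian_negative_moment_bound (β : ℝ) (hβ : β ∈ Set.Ioo (0 : ℝ) 1) :
    ∃ C : ℝ, 0 < C ∧ ∀ x ε : ℝ, 0 < x → 0 < ε →
      ∫⁻ y : ℝ, ENNReal.ofReal (|x + ε * y| ^ (-β)) ∂(gaussianReal 0 1) ≤
        ENNReal.ofReal (C * min (ε ^ (-β)) (x ^ (-β))) := by
  obtain ⟨hβ0, hβ1⟩ := hβ
  have h1β : (0:ℝ) < 1 - β := by linarith
  refine ⟨100/(1-β), by positivity, fun x ε hx hε => ?_⟩
  set a := x / ε with hadef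
  have ha : 0 < a := by positivity
  have hεβ : (0:ℝ) < ε ^ (-β) := Real.rpow_pos_of_pos hε _
  have hrw : ∀ y : ℝ, ENNReal.ofReal (|x + ε * y| ^ (-β))
      = ENNReal.ofReal (ε ^ (-β)) * ENNReal.ofReal (|a + y| ^ (-β)) := by
    intro y
    rw [← ENNReal.ofReal_mul (Real.rpow_nonneg hε.le _)]
    congr 1
    rw [show x + ε * y = ε * (a + y) by rw [hadef]; field_simp, abs_mul,
      abs_of_pos hε, Real.mul_rpow hε.le (abs_nonneg _)]
  simp_rw [hrw]
  rw [lintegral_const_mul _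
    (by fun_prop : Measurable fun y : ℝ => ENNReal.ofReal (|a + y| ^ (-β)))]
  calc ENNReal.ofReal (ε ^ (-β))
        * ∫⁻ y, ENNReal.ofReal (|a + y| ^ (-β)) ∂(gaussianReal 0 1)
      ≤ ENNReal.ofReal (ε ^ (-β)) * ENNReal.ofReal (100/(1-β) * min 1 (a ^ (-β))) := by
        gcongr
        exact G_bound hβ0 hβ1 ha
    _ = ENNReal.ofReal (100/(1-β) * min (ε ^ (-β)) (x ^ (-β))) := by
        rw [← ENNReal.ofReal_mul (Real.rpow_nonneg hε.le _)]
        congr 1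
        have hmm : ε ^ (-β) * min 1 (a ^ (-β)) = min (ε ^ (-β)) (x ^ (-β)) := by
          rw [mul_min_of_nonneg _ _ hεβ.le, mul_one]
          congr 1
          rw [hadef, Real.div_rpow hx.le hε.le, mul_comm, div_mul_cancel₀ _ hεβ.ne']
        rw [← hmm]; ring
end

section
/- Let β ∈ (0, 1). There exists a constant C > 0 such that for all ε > 0, ε′ > 0 and all x₁, x₂ ∈ ℝ with x₁ ≠ x₂, ∫_{ℝ²} p_ε(x₁ + y₁) p_{ε′}(x₂ + y₂) |y₁ − y₂|^{−β} dy₁ dy₂ ≤ C |x₁ − x₂|^{−β}. -/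
open MeasureTheory
open scoped ENNReal

/-- The one-dimensional heat kernel `p_ε(x) = (2πε)^{-1/2} exp(-x²/(2ε))`. -/
noncomputable def heatKernel (ε x : ℝ) : ℝ :=
  (2 * Real.pi * ε) ^ (-(1 : ℝ) / 2) * Real.exp (-x ^ 2 / (2 * ε))

section Aux

open Real Set

lemma heatKernel_nonneg {ε : ℝ} (hε : 0 < ε) (x : ℝ) : 0 ≤ heatKernel ε x := by
  unfold heatKernel
  have : (0:ℝ) < 2 * Real.pi * ε := by positivity
  positivity

lemma heatKernel_integrable {ε : ℝ} (hε : 0 < ε) : Integrable (heatKernel ε) := by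
  have hb : (0:ℝ) < 1 / (2*ε) := by positivity
  have hint : Integrable (fun x : ℝ => Real.exp (-(1/(2*ε)) * x ^ 2)) :=
    integrable_exp_neg_mul_sq hb
  have := hint.const_mul ((2 * Real.pi * ε) ^ (-(1 : ℝ) / 2))
  refine this.congr (Filter.Eventually.of_forall fun x => ?_)
  unfold heatKernel
  have hx : -x ^ 2 / (2*ε) = -(1/(2*ε)) * x^2 := by ring
  dsimp only
  rw [hx]

lemma heatKernel_integral {ε : ℝ} (hε : 0 < ε) : ∫ x : ℝ, heatKernel ε x = 1 := by
  unfold heatKernel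
  rw [MeasureTheory.integral_const_mul]
  have h1 : ∫ x : ℝ, Real.exp (-x ^ 2 / (2*ε)) = Real.sqrt (2 * π * ε) := by
    have := integral_gaussian (1/(2*ε))
    rw [div_div_eq_mul_div, div_one] at this
    calc ∫ x : ℝ, Real.exp (-x ^ 2 / (2*ε))
        = ∫ x : ℝ, Real.exp (-(1/(2*ε)) * x ^ 2) := by
          congr 1; ext x; congr 1; ring
      _ = Real.sqrt (π * (2 * ε)) := this
      _ = Real.sqrt (2 * π * ε) := by ring_nf
  rw [h1]
  have hpos : (0:ℝ) < 2 * Real.pi * ε := by positivity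
  rw [Real.sqrt_eq_rpow, ← Real.rpow_add hpos]
  norm_num

lemma heatKernel_lintegral {ε : ℝ} (hε : 0 < ε) :
    ∫⁻ x : ℝ, ENNReal.ofReal (heatKernel ε x) = 1 := by
  rw [← ofReal_integral_eq_lintegral_ofReal (heatKernel_integrable hε)
    (Filter.Eventually.of_forall (heatKernel_nonneg hε)), heatKernel_integral hε]
  simp

variable {β a : ℝ}

lemma absPow_integrableOn_Ioo_pos (hβ : β ∈ Set.Ioo (0:ℝ) 1) (ha : 0 < a) :
    IntegrableOn (fun w : ℝ => |w| ^ (-β)) (Ioo 0 a) := by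
  have h := (intervalIntegral.integrableOn_Ioo_rpow_iff ha).2
    (show (-1:ℝ) < -β by linarith [hβ.2])
  refine h.congr_fun (fun x hx => ?_) measurableSet_Ioo
  rw [abs_of_pos hx.1]

lemma absPow_integrableOn_Ioo_neg (hβ : β ∈ Set.Ioo (0:ℝ) 1) (ha : 0 < a) :
    IntegrableOn (fun w : ℝ => |w| ^ (-β)) (Ioo (-a) 0) := by
  have m : MeasurableEmbedding fun x : ℝ => -x :=
    (Homeomorph.neg ℝ).measurableEmbedding
  have h := absPow_integrableOn_Ioo_pos hβ ha
  rw [IntegrableOn, ← Measure.map_neg_eq_self (volume : Measure ℝ),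
    (MeasurableEmbedding.restrict_map m _), m.integrable_map_iff]
  simp only [Function.comp_def, abs_neg, neg_preimage, neg_Ioo, neg_zero, neg_neg]
  exact h

lemma Ioo_ae_union (ha : 0 < a) :
    (Ioo (-a) a : Set ℝ) =ᵐ[volume] (Ioo (-a) 0 ∪ Ioo 0 a : Set ℝ) := by
  have h0 : ∀ᵐ x : ℝ, x ≠ 0 := by
    have : volume ({0} : Set ℝ) = 0 := by simp
    exact (MeasureTheory.ae_iff.2 (by simpa using this))
  rw [Filter.eventuallyEq_set]
  filter_upwards [h0] with x hx
  simp only [mem_Ioo, mem_union]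
  constructor
  · rintro ⟨h1, h2⟩
    rcases hx.lt_or_gt with h|h
    · exact Or.inl ⟨h1, h⟩
    · exact Or.inr ⟨h, h2⟩
  · rintro (⟨h1, h2⟩|⟨h1, h2⟩) <;> constructor <;> try linarith

lemma absPow_integral_Ioo_pos (hβ : β ∈ Set.Ioo (0:ℝ) 1) (ha : 0 < a) :
    ∫ w in Ioo (0:ℝ) a, |w| ^ (-β) = a ^ (1 - β) / (1 - β) := by
  have h1 : ∫ w in Ioo (0:ℝ) a, |w| ^ (-β) = ∫ w in Ioo (0:ℝ) a, w ^ (-β) := by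
    refine setIntegral_congr_fun measurableSet_Ioo (fun x hx => ?_)
    rw [abs_of_pos hx.1]
  rw [h1, ← integral_Ioc_eq_integral_Ioo, ← intervalIntegral.integral_of_le ha.le,
    integral_rpow (Or.inl (by linarith [hβ.2] : (-1:ℝ) < -β))]
  rw [show -β + 1 = 1 - β by ring, Real.zero_rpow (by linarith [hβ.2]), sub_zero]

lemma absPow_integral_Ioo_neg (hβ : β ∈ Set.Ioo (0:ℝ) 1) (ha : 0 < a) :
    ∫ w in Ioo (-a) (0:ℝ), |w| ^ (-β) = a ^ (1 - β) / (1 - β) := by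
  have m : MeasurableEmbedding fun x : ℝ => -x :=
    (Homeomorph.neg ℝ).measurableEmbedding
  have h := MeasurableEmbedding.setIntegral_map (μ := volume) m
    (fun w : ℝ => |w| ^ (-β)) (Ioo (-a) 0)
  rw [Measure.map_neg_eq_self (volume : Measure ℝ)] at h
  rw [h]
  simp only [abs_neg, neg_preimage, neg_Ioo, neg_zero, neg_neg]
  exact absPow_integral_Ioo_pos hβ ha

lemma absPow_integral_Ioo (hβ : β ∈ Set.Ioo (0:ℝ) 1) (ha : 0 < a) :
    ∫ w in Ioo (-a) a, |w| ^ (-β) = 2 * (a ^ (1 - β) / (1 - β)) := by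
  rw [setIntegral_congr_set (Ioo_ae_union ha),
    setIntegral_union (by rw [Set.disjoint_left]; rintro x ⟨_, h2⟩ ⟨h3, _⟩; linarith)
      measurableSet_Ioo (absPow_integrableOn_Ioo_neg hβ ha) (absPow_integrableOn_Ioo_pos hβ ha),
    absPow_integral_Ioo_pos hβ ha, absPow_integral_Ioo_neg hβ ha]
  ring

lemma absPow_lintegral_Ioo (hβ : β ∈ Set.Ioo (0:ℝ) 1) (ha : 0 < a) :
    ∫⁻ w in Ioo (-a) a, ENNReal.ofReal (|w| ^ (-β)) =
      ENNReal.ofReal (2 * (a ^ (1 - β) / (1 - β))) := by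
  rw [← ofReal_integral_eq_lintegral_ofReal
    ((absPow_integrableOn_Ioo_neg hβ ha).union (absPow_integrableOn_Ioo_pos hβ ha)|>.congr_set_ae
      (Ioo_ae_union ha))
    (Filter.Eventually.of_forall (fun x => Real.rpow_nonneg (abs_nonneg x) _)),
    absPow_integral_Ioo hβ ha]

lemma sup_mul_le {ε r : ℝ} (hε : 0 < ε) (hr : 0 < r) :
    (2 * Real.pi * ε) ^ (-(1:ℝ)/2) * Real.exp (-r^2/(32*ε)) * r ≤ 3 := by
  have hπ := Real.pi_gt_three
  have h2ε : (0:ℝ) < 2 * Real.pi * ε := by positivity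
  have hA : (0:ℝ) < Real.sqrt (2 * Real.pi * ε) := Real.sqrt_pos.2 h2ε
  have hrpow : (2 * Real.pi * ε) ^ (-(1:ℝ)/2) = (Real.sqrt (2 * Real.pi * ε))⁻¹ := by
    rw [show (-(1:ℝ)/2) = -(1/2) by norm_num, Real.rpow_neg h2ε.le, ← Real.sqrt_eq_rpow]
  have hs : (0:ℝ) < r^2/(32*ε) := by positivity
  have hexp : Real.exp (-r^2/(32*ε)) ≤ 1 / (1 + r^2/(32*ε)) := by
    rw [neg_div, Real.exp_neg, ← one_div]
    refine one_div_le_one_div_of_le (by positivity) ?_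
    linarith [Real.add_one_le_exp (r^2/(32*ε))]
  have hB : (0:ℝ) < Real.sqrt (32*ε) := Real.sqrt_pos.2 (by positivity)
  have hB2 : (Real.sqrt (32*ε))^2 = 32*ε := Real.sq_sqrt (by positivity)
  have hamgm : r / (1 + r^2/(32*ε)) ≤ Real.sqrt (32*ε) / 2 := by
    rw [div_le_div_iff₀ (by positivity) (by norm_num)]
    have ht : (32*ε) * (r^2/(32*ε)) = r^2 := by field_simp
    nlinarith [mul_nonneg hB.le (sq_nonneg (Real.sqrt (32*ε) - r)), hB2, ht, hε, hs.le]
  have hBA : Real.sqrt (32*ε) ≤ 6 * Real.sqrt (2 * Real.pi * ε) := by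
    have h36 : (6:ℝ) * Real.sqrt (2 * Real.pi * ε) = Real.sqrt (36 * (2 * Real.pi * ε)) := by
      rw [show (36:ℝ) * (2 * Real.pi * ε) = (6 * Real.sqrt (2 * Real.pi * ε))^2 by
          rw [mul_pow, Real.sq_sqrt h2ε.le]; ring,
        Real.sqrt_sq (by positivity)]
    rw [h36]
    exact Real.sqrt_le_sqrt (by nlinarith)
  calc (2 * Real.pi * ε) ^ (-(1:ℝ)/2) * Real.exp (-r^2/(32*ε)) * r
      = (Real.sqrt (2 * Real.pi * ε))⁻¹ * (Real.exp (-r^2/(32*ε)) * r) := by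
        rw [hrpow]; ring
    _ ≤ (Real.sqrt (2 * Real.pi * ε))⁻¹ * (r / (1 + r^2/(32*ε))) := by
        refine mul_le_mul_of_nonneg_left ?_ (by positivity)
        calc Real.exp (-r^2/(32*ε)) * r ≤ (1/(1 + r^2/(32*ε))) * r :=
              mul_le_mul_of_nonneg_right hexp hr.le
          _ = r / (1 + r^2/(32*ε)) := by ring
    _ ≤ (Real.sqrt (2 * Real.pi * ε))⁻¹ * (Real.sqrt (32*ε) / 2) :=
        mul_le_mul_of_nonneg_left hamgm (by positivity)
    _ ≤ (Real.sqrt (2 * Real.pi * ε))⁻¹ * (6 * Real.sqrt (2 * Real.pi * ε) / 2) :=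
        mul_le_mul_of_nonneg_left (by linarith) (by positivity)
    _ = 3 := by field_simp; ring

lemma heatKernel_le_sup {ε r u : ℝ} (hε : 0 < ε) (hr : 0 ≤ r) (hu : r/4 ≤ |u|) :
    heatKernel ε u ≤ (2 * Real.pi * ε) ^ (-(1:ℝ)/2) * Real.exp (-r^2/(32*ε)) := by
  unfold heatKernel
  have h2ε : (0:ℝ) < 2 * Real.pi * ε := by positivity
  refine mul_le_mul_of_nonneg_left ?_ (Real.rpow_nonneg h2ε.le _)
  refine Real.exp_le_exp.2 ?_
  have hu2 : r^2/16 ≤ u^2 := by nlinarith [sq_abs u, abs_nonneg u]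
  rw [div_le_div_iff₀ (by positivity) (by positivity : (0:ℝ) < 32*ε)]
  nlinarith [hε]

lemma heatKernel_continuous {ε : ℝ} : Continuous (heatKernel ε) := by
  unfold heatKernel
  fun_prop

end Aux

/-- For `β ∈ (0,1)` there is `C > 0` such that for all `ε, ε' > 0` and `x₁ ≠ x₂`,
`∫_{ℝ²} p_ε(x₁+y₁) p_{ε'}(x₂+y₂) |y₁-y₂|^{-β} dy₁ dy₂ ≤ C |x₁-x₂|^{-β}`. -/
theorem heatKernel_convolution_bound (β : ℝ) (hβ : β ∈ Set.Ioo (0 : ℝ) 1) :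
    ∃ C : ℝ, 0 < C ∧ ∀ ε ε' x₁ x₂ : ℝ, 0 < ε → 0 < ε' → x₁ ≠ x₂ →
      ∫⁻ y : ℝ × ℝ,
          ENNReal.ofReal (heatKernel ε (x₁ + y.1) * heatKernel ε' (x₂ + y.2) *
            |y.1 - y.2| ^ (-β)) ≤
        ENNReal.ofReal (C * |x₁ - x₂| ^ (-β)) := by
  obtain ⟨hβ0, hβ1⟩ := hβ
  have h1β : (0:ℝ) < 1 - β := by linarith
  refine ⟨2 ^ β * (1 + 6/(1-β)), by positivity, ?_⟩
  intro ε ε' x₁ x₂ hε hε' hne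
  set r : ℝ := |x₁ - x₂| with hrdef
  have hr : 0 < r := abs_pos.2 (sub_ne_zero.2 hne)
  set a : ℝ := r/2 with hadef
  have ha : 0 < a := by positivity
  -- pieces
  set F : ℝ → ℝ≥0∞ := fun u => ENNReal.ofReal (heatKernel ε (x₁ + u)) with hF
  set G : ℝ → ℝ≥0∞ := fun v => ENNReal.ofReal (heatKernel ε' (x₂ + v)) with hG
  set W : ℝ → ℝ≥0∞ :=
    fun w => (Set.Ioo (-a) a).indicator (fun w => ENNReal.ofReal (|w| ^ (-β))) w with hW
  set Sr : ℝ → ℝ := fun δ => (2 * Real.pi * δ) ^ (-(1:ℝ)/2) * Real.exp (-r^2/(32*δ)) with hSr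
  have hSrpos : ∀ δ : ℝ, 0 < δ → 0 ≤ Sr δ := by
    intro δ hδ
    have : (0:ℝ) < 2 * Real.pi * δ := by positivity
    rw [hSr]; positivity
  -- measurability
  have mF : Measurable F := by
    apply ENNReal.measurable_ofReal.comp
    exact (heatKernel_continuous.comp (continuous_const.add continuous_id)).measurable
  have mG : Measurable G := by
    apply ENNReal.measurable_ofReal.comp
    exact (heatKernel_continuous.comp (continuous_const.add continuous_id)).measurable
  have mW : Measurable W := by
    refine Measurable.indicator ?_ measurableSet_Ioo
    measurability
  have mWsub : Measurable (fun y : ℝ × ℝ => W (y.1 - y.2)) :=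
    mW.comp (measurable_fst.sub measurable_snd)
  -- values of W
  have hWval : ∀ w : ℝ, |w| < a → W w = ENNReal.ofReal (|w| ^ (-β)) := by
    intro w hw
    rw [hW]
    exact Set.indicator_of_mem (Set.mem_Ioo.2 (abs_lt.1 hw)) _
  have hWneg : ∀ w : ℝ, W (-w) = W w := by
    intro w
    rw [hW]
    simp only [Set.indicator_apply, Set.mem_Ioo, abs_neg]
    have : (-a < -w ∧ -w < a) ↔ (-a < w ∧ w < a) := by constructor <;> (rintro ⟨h1, h2⟩; constructor <;> linarith)
    rw [if_congr this rfl rfl]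
  -- triangle helper
  have tri : ∀ p q : ℝ, |p - q| ≤ |p| + |q| := fun p q => by
    calc |p - q| = |p + -q| := by rw [sub_eq_add_neg]
      _ ≤ |p| + |-q| := abs_add_le _ _
      _ = |p| + |q| := by rw [abs_neg]
  -- pointwise bound
  have key : ∀ y : ℝ × ℝ,
      ENNReal.ofReal (heatKernel ε (x₁ + y.1) * heatKernel ε' (x₂ + y.2) *
          |y.1 - y.2| ^ (-β)) ≤
        F y.1 * G y.2 * ENNReal.ofReal (a ^ (-β))
        + ENNReal.ofReal (Sr ε) * G y.2 * W (y.1 - y.2)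
        + F y.1 * ENNReal.ofReal (Sr ε') * W (y.1 - y.2) := by
    intro y
    set u : ℝ := x₁ + y.1 with hu
    set v : ℝ := x₂ + y.2 with hv
    set w : ℝ := y.1 - y.2 with hwdef
    have hku : 0 ≤ heatKernel ε u := heatKernel_nonneg hε u
    have hkv : 0 ≤ heatKernel ε' v := heatKernel_nonneg hε' v
    have hwβ : 0 ≤ |w| ^ (-β) := Real.rpow_nonneg (abs_nonneg w) _
    by_cases hcase : |w| < a
    · -- near diagonal
      have hWw : W w = ENNReal.ofReal (|w| ^ (-β)) := hWval w hcase
      have huv : a ≤ |u - v| := by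
        have h1 : r ≤ |u - v| + |w| := by
          calc r = |(u - v) - w| := by rw [hrdef]; congr 1; rw [hu, hv, hwdef]; ring
            _ ≤ |u - v| + |w| := tri _ _
        have : a = r/2 := hadef
        linarith
      rcases le_or_gt (r/4) |u| with hub | hub
      · -- |u| big : second term
        have h1 : heatKernel ε u ≤ Sr ε := heatKernel_le_sup hε hr.le hub
        calc ENNReal.ofReal (heatKernel ε u * heatKernel ε' v * |w| ^ (-β))
            ≤ ENNReal.ofReal (Sr ε * heatKernel ε' v * |w| ^ (-β)) := by
              refine ENNReal.ofReal_le_ofReal ?_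
              refine mul_le_mul_of_nonneg_right (mul_le_mul_of_nonneg_right h1 hkv) hwβ
          _ = ENNReal.ofReal (Sr ε) * G y.2 * W w := by
              rw [ENNReal.ofReal_mul (mul_nonneg (hSrpos ε hε) hkv),
                ENNReal.ofReal_mul (hSrpos ε hε), hWw, hG]
          _ ≤ _ := le_add_self.trans le_self_add
      · -- |v| big : third term
        have hvb : r/4 ≤ |v| := by
          have h2 : |u - v| ≤ |u| + |v| := tri u v
          have : a = r/2 := hadef
          linarith
        have h1 : heatKernel ε' v ≤ Sr ε' := heatKernel_le_sup hε' hr.le hvb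
        calc ENNReal.ofReal (heatKernel ε u * heatKernel ε' v * |w| ^ (-β))
            ≤ ENNReal.ofReal (heatKernel ε u * Sr ε' * |w| ^ (-β)) := by
              refine ENNReal.ofReal_le_ofReal ?_
              refine mul_le_mul_of_nonneg_right (mul_le_mul_of_nonneg_left h1 hku) hwβ
          _ = F y.1 * ENNReal.ofReal (Sr ε') * W w := by
              rw [ENNReal.ofReal_mul (mul_nonneg hku (hSrpos ε' hε')),
                ENNReal.ofReal_mul hku, hWw, hF]
          _ ≤ _ := le_add_self
    · -- far from diagonal
      push_neg at hcase
      have h1 : |w| ^ (-β) ≤ a ^ (-β) :=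
        Real.rpow_le_rpow_of_nonpos ha hcase (neg_nonpos.2 hβ0.le)
      calc ENNReal.ofReal (heatKernel ε u * heatKernel ε' v * |w| ^ (-β))
          ≤ ENNReal.ofReal (heatKernel ε u * heatKernel ε' v * a ^ (-β)) := by
            refine ENNReal.ofReal_le_ofReal ?_
            exact mul_le_mul_of_nonneg_left h1 (mul_nonneg hku hkv)
        _ = F y.1 * G y.2 * ENNReal.ofReal (a ^ (-β)) := by
            rw [ENNReal.ofReal_mul (mul_nonneg hku hkv), ENNReal.ofReal_mul hku, hF, hG]
        _ ≤ _ := le_self_add.trans le_self_add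
  -- integrals of the pieces
  have hFint : ∫⁻ u : ℝ, F u = 1 := by
    rw [hF]
    rw [show (fun u : ℝ => ENNReal.ofReal (heatKernel ε (x₁ + u)))
        = fun u : ℝ => (fun t => ENNReal.ofReal (heatKernel ε t)) (x₁ + u) from rfl,
      lintegral_add_left_eq_self (fun t => ENNReal.ofReal (heatKernel ε t)) x₁]
    exact heatKernel_lintegral hε
  have hGint : ∫⁻ v : ℝ, G v = 1 := by
    rw [hG]
    rw [show (fun v : ℝ => ENNReal.ofReal (heatKernel ε' (x₂ + v)))
        = fun v : ℝ => (fun t => ENNReal.ofReal (heatKernel ε' t)) (x₂ + v) from rfl,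
      lintegral_add_left_eq_self (fun t => ENNReal.ofReal (heatKernel ε' t)) x₂]
    exact heatKernel_lintegral hε'
  set K : ℝ≥0∞ := ENNReal.ofReal (2 * (a ^ (1 - β) / (1 - β))) with hK
  have hWint : ∫⁻ w : ℝ, W w = K := by
    rw [hW, lintegral_indicator measurableSet_Ioo]
    exact absPow_lintegral_Ioo ⟨hβ0, hβ1⟩ ha
  have mT2 : Measurable (fun y : ℝ × ℝ => ENNReal.ofReal (Sr ε) * G y.2 * W (y.1 - y.2)) :=
    ((mG.comp measurable_snd).const_mul _).mul mWsub
  have mT3 : Measurable (fun y : ℝ × ℝ => F y.1 * ENNReal.ofReal (Sr ε') * W (y.1 - y.2)) :=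
    ((mF.comp measurable_fst).mul_const _).mul mWsub
  have mWy : ∀ c : ℝ, Measurable (fun t : ℝ => W (t - c)) :=
    fun c => mW.comp (measurable_id.sub_const c)
  have mWy' : ∀ c : ℝ, Measurable (fun t : ℝ => W (c - t)) :=
    fun c => mW.comp (measurable_const.sub measurable_id)
  -- the three double integrals
  have hT1 : ∫⁻ y : ℝ × ℝ, F y.1 * G y.2 * ENNReal.ofReal (a ^ (-β))
      = ENNReal.ofReal (a ^ (-β)) := by
    rw [show (fun y : ℝ × ℝ => F y.1 * G y.2 * ENNReal.ofReal (a ^ (-β)))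
        = fun y : ℝ × ℝ => F y.1 * ((fun v => G v * ENNReal.ofReal (a ^ (-β))) y.2) by
          funext y; dsimp only; ring]
    rw [Measure.volume_eq_prod, lintegral_prod_mul mF.aemeasurable
      ((mG.mul_const _).aemeasurable)]
    rw [lintegral_mul_const _ mG, hFint, hGint, one_mul, one_mul]
  have hT2 : ∫⁻ y : ℝ × ℝ, ENNReal.ofReal (Sr ε) * G y.2 * W (y.1 - y.2)
      = ENNReal.ofReal (Sr ε) * K := by
    rw [Measure.volume_eq_prod, lintegral_prod_symm _ mT2.aemeasurable]
    have inner : ∀ y₂ : ℝ, ∫⁻ y₁ : ℝ, ENNReal.ofReal (Sr ε) * G y₂ * W (y₁ - y₂)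
        = ENNReal.ofReal (Sr ε) * G y₂ * K := by
      intro y₂
      rw [lintegral_const_mul _ (mWy y₂),
        lintegral_sub_right_eq_self W y₂, hWint]
    simp only [inner]
    rw [show (fun y₂ : ℝ => ENNReal.ofReal (Sr ε) * G y₂ * K)
        = fun y₂ : ℝ => (ENNReal.ofReal (Sr ε) * K) * G y₂ by funext y₂; ring]
    rw [lintegral_const_mul _ mG, hGint, mul_one]
  have hT3 : ∫⁻ y : ℝ × ℝ, F y.1 * ENNReal.ofReal (Sr ε') * W (y.1 - y.2)
      = ENNReal.ofReal (Sr ε') * K := by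
    rw [Measure.volume_eq_prod, lintegral_prod _ mT3.aemeasurable]
    have inner : ∀ y₁ : ℝ, ∫⁻ y₂ : ℝ, F y₁ * ENNReal.ofReal (Sr ε') * W (y₁ - y₂)
        = F y₁ * ENNReal.ofReal (Sr ε') * K := by
      intro y₁
      rw [lintegral_const_mul _ (mWy' y₁)]
      congr 1
      have : ∀ y₂ : ℝ, W (y₁ - y₂) = W (y₂ - y₁) := by
        intro y₂
        rw [show y₁ - y₂ = -(y₂ - y₁) by ring, hWneg]
      simp only [this]
      rw [lintegral_sub_right_eq_self W y₁, hWint]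
    simp only [inner]
    rw [show (fun y₁ : ℝ => F y₁ * ENNReal.ofReal (Sr ε') * K)
        = fun y₁ : ℝ => (ENNReal.ofReal (Sr ε') * K) * F y₁ by funext y₁; ring]
    rw [lintegral_const_mul _ mF, hFint, mul_one]
  -- put it together
  have step : ∫⁻ y : ℝ × ℝ,
      ENNReal.ofReal (heatKernel ε (x₁ + y.1) * heatKernel ε' (x₂ + y.2) *
        |y.1 - y.2| ^ (-β))
      ≤ ENNReal.ofReal (a ^ (-β)) + ENNReal.ofReal (Sr ε) * K
        + ENNReal.ofReal (Sr ε') * K := by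
    calc _ ≤ ∫⁻ y : ℝ × ℝ, (F y.1 * G y.2 * ENNReal.ofReal (a ^ (-β))
        + ENNReal.ofReal (Sr ε) * G y.2 * W (y.1 - y.2)
        + F y.1 * ENNReal.ofReal (Sr ε') * W (y.1 - y.2)) := lintegral_mono key
      _ = _ := by
        rw [lintegral_add_right _ mT3, lintegral_add_right _ mT2, hT1, hT2, hT3]
  refine step.trans ?_
  -- final numeric bound
  have hKreal : (0:ℝ) ≤ 2 * (a ^ (1 - β) / (1 - β)) := by positivity
  have hmerge : ENNReal.ofReal (a ^ (-β)) + ENNReal.ofReal (Sr ε) * K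
      + ENNReal.ofReal (Sr ε') * K
      = ENNReal.ofReal (a ^ (-β) + Sr ε * (2 * (a ^ (1 - β) / (1 - β)))
        + Sr ε' * (2 * (a ^ (1 - β) / (1 - β)))) := by
    rw [hK, ← ENNReal.ofReal_mul (hSrpos ε hε), ← ENNReal.ofReal_mul (hSrpos ε' hε'),
      ← ENNReal.ofReal_add (Real.rpow_nonneg ha.le _) (mul_nonneg (hSrpos ε hε) hKreal),
      ← ENNReal.ofReal_add (add_nonneg (Real.rpow_nonneg ha.le _)
        (mul_nonneg (hSrpos ε hε) hKreal)) (mul_nonneg (hSrpos ε' hε') hKreal)]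
  rw [hmerge]
  refine ENNReal.ofReal_le_ofReal ?_
  -- real inequality
  have ha2 : a ^ (-β) = 2 ^ β * r ^ (-β) := by
    rw [hadef, show r / 2 = r * 2⁻¹ by ring, Real.mul_rpow hr.le (by norm_num),
      Real.inv_rpow (by norm_num), ← Real.rpow_neg (by norm_num), neg_neg]
    ring
  have haK : 2 * (a ^ (1 - β) / (1 - β)) = r * (2 ^ β * r ^ (-β)) / (1 - β) := by
    have h1 : a ^ (1 - β) = a * a ^ (-β) := by
      rw [show (1:ℝ) - β = 1 + (-β) by ring, Real.rpow_add ha, Real.rpow_one]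
    rw [h1, ha2, hadef]
    field_simp
  have hSb : Sr ε * r ≤ 3 := sup_mul_le hε hr
  have hSb' : Sr ε' * r ≤ 3 := sup_mul_le hε' hr
  have hrβ : (0:ℝ) ≤ 2 ^ β * r ^ (-β) / (1 - β) := by positivity
  have hbound : ∀ δ : ℝ, 0 < δ → Sr δ * r ≤ 3 →
      Sr δ * (2 * (a ^ (1 - β) / (1 - β))) ≤ 3 * (2 ^ β * r ^ (-β) / (1 - β)) := by
    intro δ hδ hSδ
    rw [haK]
    calc Sr δ * (r * (2 ^ β * r ^ (-β)) / (1 - β))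
        = (Sr δ * r) * (2 ^ β * r ^ (-β) / (1 - β)) := by ring
      _ ≤ 3 * (2 ^ β * r ^ (-β) / (1 - β)) := mul_le_mul_of_nonneg_right hSδ hrβ
  have h2 := hbound ε hε hSb
  have h3 := hbound ε' hε' hSb'
  have hfinal : 2 ^ β * r ^ (-β) + 3 * (2 ^ β * r ^ (-β) / (1 - β))
      + 3 * (2 ^ β * r ^ (-β) / (1 - β)) = 2 ^ β * (1 + 6/(1-β)) * r ^ (-β) := by
    field_simp
    ring
  linarith [ha2, h2, h3, hfinal.le, hfinal.ge]
end

section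
/- Let β ∈ (0, 1). There exists a constant C > 0 such that for every t > 0, all δ > 0, δ′ > 0, and all s₁, s₂ ∈ [0, t] with s₁ ≠ s₂, ∫₀^t ∫₀^t φ_δ(t − s₁ − r₁) φ_{δ′}(t − s₂ − r₂) |r₁ − r₂|^{−β} dr₁ dr₂ ≤ C |s₁ − s₂|^{−β}. -/
open MeasureTheory

/-- The rectangular approximation of the Dirac delta: `φ_δ = δ⁻¹ 1_{[0,δ]}`. -/
noncomputable def phiApprox (δ x : ℝ) : ℝ := if x ∈ Set.Icc 0 δ then δ⁻¹ else 0

namespace PhiAux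

open Set Real

lemma phi_nonneg (δ : ℝ) (hδ : 0 < δ) (x : ℝ) : 0 ≤ phiApprox δ x := by
  unfold phiApprox; split_ifs <;> positivity

lemma phi_measurable (δ : ℝ) : Measurable (phiApprox δ) := by
  unfold phiApprox
  exact Measurable.ite measurableSet_Icc measurable_const measurable_const

lemma abs_rpow_measurable (β : ℝ) (hβ0 : β ≠ 0) :
    Measurable (fun x : ℝ => |x| ^ (-β)) := by
  have heq : (fun x : ℝ => |x| ^ (-β))
      = fun x : ℝ => if x = 0 then 0 else Real.exp (Real.log |x| * (-β)) := by
    funext x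
    by_cases hx : x = 0
    · simp [hx, Real.zero_rpow (neg_ne_zero.mpr hβ0)]
    · rw [if_neg hx, Real.rpow_def_of_pos (abs_pos.mpr hx)]
  rw [heq]
  exact Measurable.ite (measurableSet_eq) measurable_const
    (Real.measurable_exp.comp ((Real.measurable_log.comp measurable_abs).mul_const _))

lemma phi_eq_indicator (δ a : ℝ) (g : ℝ → ℝ) (x : ℝ) :
    ENNReal.ofReal (phiApprox δ (a - x) * g x)
      = (Set.Icc (a - δ) a).indicator (fun y => ENNReal.ofReal (δ⁻¹ * g y)) x := by
  have hmem : a - x ∈ Set.Icc 0 δ ↔ x ∈ Set.Icc (a - δ) a := by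
    simp only [Set.mem_Icc]
    constructor <;> (rintro ⟨h1, h2⟩; constructor <;> linarith)
  unfold phiApprox
  by_cases h : x ∈ Set.Icc (a - δ) a
  · rw [Set.indicator_of_mem h, if_pos (hmem.mpr h)]
  · rw [Set.indicator_of_notMem h, if_neg (fun hh => h (hmem.mp hh))]
    simp

lemma mass (δ a : ℝ) (hδ : 0 < δ) (s : Set ℝ) :
    ∫⁻ x in s, ENNReal.ofReal (phiApprox δ (a - x)) ≤ 1 := by
  have h : ∀ x, ENNReal.ofReal (phiApprox δ (a - x))
      = (Set.Icc (a - δ) a).indicator (fun _ => ENNReal.ofReal δ⁻¹) x := by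
    intro x
    have := phi_eq_indicator δ a (fun _ => 1) x
    simpa using this
  simp_rw [h]
  rw [lintegral_indicator measurableSet_Icc, setLIntegral_const]
  have hle : (volume.restrict s) (Set.Icc (a - δ) a) ≤ volume (Set.Icc (a - δ) a) :=
    Measure.restrict_le_self _
  calc ENNReal.ofReal δ⁻¹ * (volume.restrict s) (Set.Icc (a - δ) a)
      ≤ ENNReal.ofReal δ⁻¹ * volume (Set.Icc (a - δ) a) := by gcongr
    _ = ENNReal.ofReal δ⁻¹ * ENNReal.ofReal δ := by
        rw [Real.volume_Icc]; ring_nf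
    _ = 1 := by
        rw [← ENNReal.ofReal_mul (by positivity), inv_mul_cancel₀ hδ.ne']
        simp

lemma core (β : ℝ) (hβ : β ∈ Set.Ioo (0:ℝ) 1) (d L : ℝ) (hL : 0 < L) :
    ∫⁻ x in Set.Ioc d (d + L), ENNReal.ofReal ((x - d) ^ (-β))
      = ENNReal.ofReal (L ^ (1 - β) / (1 - β)) := by
  have hβ1 : (-1:ℝ) < -β := by linarith [hβ.2]
  have hint : IntegrableOn (fun x => (x - d) ^ (-β)) (Set.Ioc d (d + L)) := by
    have h1 := (intervalIntegral.intervalIntegrable_rpow' (a := 0) (b := L) hβ1).comp_sub_right d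
    rw [intervalIntegrable_iff_integrableOn_Ioc_of_le (by linarith)] at h1
    simpa [add_comm] using h1
  have hnn : 0 ≤ᵐ[volume.restrict (Set.Ioc d (d + L))] fun x => (x - d) ^ (-β) := by
    filter_upwards [ae_restrict_mem measurableSet_Ioc] with x hx
    exact Real.rpow_nonneg (by linarith [hx.1]) _
  rw [← ofReal_integral_eq_lintegral_ofReal hint hnn]
  congr 1
  rw [← intervalIntegral.integral_of_le (by linarith : d ≤ d + L)]
  rw [intervalIntegral.integral_comp_sub_right (fun x => x ^ (-β)) d]
  simp only [sub_self, add_sub_cancel_left]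
  rw [integral_rpow (Or.inl hβ1)]
  rw [Real.zero_rpow (by intro h; linarith [hβ.2] : -β + 1 ≠ 0)]
  have h2 : -β + 1 = 1 - β := by ring
  rw [h2]
  ring

lemma core' (β : ℝ) (hβ : β ∈ Set.Ioo (0:ℝ) 1) (d L : ℝ) (hL : 0 < L) :
    ∫⁻ x in Set.Ico (d - L) d, ENNReal.ofReal ((d - x) ^ (-β))
      = ENNReal.ofReal (L ^ (1 - β) / (1 - β)) := by
  have hβ1 : (-1:ℝ) < -β := by linarith [hβ.2]
  have hint : IntegrableOn (fun x => (d - x) ^ (-β)) (Set.Ioc (d - L) d) := by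
    have h1 := (intervalIntegral.intervalIntegrable_rpow' (a := L) (b := 0) hβ1).comp_sub_left d
    rw [intervalIntegrable_iff_integrableOn_Ioc_of_le (by linarith)] at h1
    simpa using h1
  have hmeq : (volume : Measure ℝ).restrict (Set.Ico (d - L) d)
      = volume.restrict (Set.Ioc (d - L) d) :=
    Measure.restrict_congr_set Ico_ae_eq_Ioc
  rw [hmeq]
  have hnn : 0 ≤ᵐ[volume.restrict (Set.Ioc (d - L) d)] fun x => (d - x) ^ (-β) := by
    filter_upwards [ae_restrict_mem measurableSet_Ioc] with x hx
    exact Real.rpow_nonneg (by linarith [hx.2]) _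
  rw [← ofReal_integral_eq_lintegral_ofReal hint hnn]
  congr 1
  rw [← intervalIntegral.integral_of_le (by linarith : d - L ≤ d)]
  rw [intervalIntegral.integral_comp_sub_left (fun x => x ^ (-β)) d]
  simp only [sub_self, sub_sub_cancel]
  rw [integral_rpow (Or.inl hβ1)]
  rw [Real.zero_rpow (by intro h; linarith [hβ.2] : -β + 1 ≠ 0)]
  have h2 : -β + 1 = 1 - β := by ring
  rw [h2]
  ring

/-- Integral of `|x-c|^{-β}` over a window of length `L` is at most `3/(1-β) L^{1-β}`. -/
lemma window (β : ℝ) (hβ : β ∈ Set.Ioo (0:ℝ) 1) (c a L : ℝ) (hL : 0 < L) :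
    ∫⁻ x in Set.Icc a (a + L), ENNReal.ofReal (|x - c| ^ (-β))
      ≤ ENNReal.ofReal (3 / (1 - β) * L ^ (1 - β)) := by
  have h1β : (0:ℝ) < 1 - β := by linarith [hβ.2]
  set S := Set.Icc a (a + L) with hS
  set T := S ∩ {x : ℝ | L ≤ |x - c|} with hT
  have hTmeas : MeasurableSet T :=
    measurableSet_Icc.inter
      (measurableSet_le measurable_const ((measurable_id.sub measurable_const).abs))
  have hsub : S ⊆ (Set.Icc (c - L) c ∪ Set.Ioc c (c + L)) ∪ T := by
    intro x hx
    rcases le_or_gt L |x - c| with h | h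
    · exact Or.inr ⟨hx, h⟩
    · rw [abs_lt] at h
      rcases le_or_gt x c with h2 | h2
      · exact Or.inl (Or.inl ⟨by linarith, h2⟩)
      · exact Or.inl (Or.inr ⟨h2, by linarith⟩)
  have hleft : ∫⁻ x in Set.Icc (c - L) c, ENNReal.ofReal (|x - c| ^ (-β))
      = ENNReal.ofReal (L ^ (1 - β) / (1 - β)) := by
    rw [← Measure.restrict_congr_set Ico_ae_eq_Icc]
    have heq : ∫⁻ x in Set.Ico (c - L) c, ENNReal.ofReal (|x - c| ^ (-β))
        = ∫⁻ x in Set.Ico (c - L) c, ENNReal.ofReal ((c - x) ^ (-β)) := by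
      refine setLIntegral_congr_fun measurableSet_Ico ?_
      intro x hx; dsimp only
      rw [abs_sub_comm, abs_of_nonneg (by linarith [hx.2])]
    rw [heq, core' β hβ c L hL]
  have hright : ∫⁻ x in Set.Ioc c (c + L), ENNReal.ofReal (|x - c| ^ (-β))
      = ENNReal.ofReal (L ^ (1 - β) / (1 - β)) := by
    have heq : ∫⁻ x in Set.Ioc c (c + L), ENNReal.ofReal (|x - c| ^ (-β))
        = ∫⁻ x in Set.Ioc c (c + L), ENNReal.ofReal ((x - c) ^ (-β)) := by
      refine setLIntegral_congr_fun measurableSet_Ioc ?_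
      intro x hx; dsimp only
      rw [abs_of_nonneg (by linarith [hx.1])]
    rw [heq, core β hβ c L hL]
  have htail : ∫⁻ x in T, ENNReal.ofReal (|x - c| ^ (-β))
      ≤ ENNReal.ofReal (L ^ (-β)) * ENNReal.ofReal L := by
    calc ∫⁻ x in T, ENNReal.ofReal (|x - c| ^ (-β))
        ≤ ∫⁻ _ in T, ENNReal.ofReal (L ^ (-β)) := by
          refine lintegral_mono_ae ?_
          filter_upwards [ae_restrict_mem hTmeas] with x hx
          exact ENNReal.ofReal_le_ofReal
            (Real.rpow_le_rpow_of_nonpos hL hx.2 (by linarith [hβ.1]))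
      _ = ENNReal.ofReal (L ^ (-β)) * volume T := setLIntegral_const _ _
      _ ≤ ENNReal.ofReal (L ^ (-β)) * ENNReal.ofReal L := by
          gcongr
          calc volume T ≤ volume S := measure_mono Set.inter_subset_left
            _ = ENNReal.ofReal L := by rw [hS, Real.volume_Icc]; ring_nf
  calc ∫⁻ x in S, ENNReal.ofReal (|x - c| ^ (-β))
      ≤ ∫⁻ x in (Set.Icc (c - L) c ∪ Set.Ioc c (c + L)) ∪ T,
          ENNReal.ofReal (|x - c| ^ (-β)) := lintegral_mono_set hsub
    _ ≤ (∫⁻ x in Set.Icc (c - L) c ∪ Set.Ioc c (c + L), ENNReal.ofReal (|x - c| ^ (-β)))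
          + ∫⁻ x in T, ENNReal.ofReal (|x - c| ^ (-β)) := lintegral_union_le _ _ _
    _ ≤ ((∫⁻ x in Set.Icc (c - L) c, ENNReal.ofReal (|x - c| ^ (-β)))
          + ∫⁻ x in Set.Ioc c (c + L), ENNReal.ofReal (|x - c| ^ (-β)))
          + ∫⁻ x in T, ENNReal.ofReal (|x - c| ^ (-β)) := by
        gcongr
        exact lintegral_union_le _ _ _
    _ ≤ (ENNReal.ofReal (L ^ (1 - β) / (1 - β)) + ENNReal.ofReal (L ^ (1 - β) / (1 - β)))
          + ENNReal.ofReal (L ^ (-β)) * ENNReal.ofReal L := by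
        rw [hleft, hright]; gcongr
    _ ≤ ENNReal.ofReal (3 / (1 - β) * L ^ (1 - β)) := by
        rw [← ENNReal.ofReal_mul (by positivity), ← ENNReal.ofReal_add (by positivity)
          (by positivity), ← ENNReal.ofReal_add (by positivity) (by positivity)]
        refine ENNReal.ofReal_le_ofReal ?_
        have hpow : L ^ (-β) * L = L ^ (1 - β) := by
          nth_rewrite 2 [← Real.rpow_one L]
          rw [← Real.rpow_add hL, show -β + 1 = 1 - β by ring]
        rw [hpow]
        have hP : (0:ℝ) < L ^ (1 - β) := Real.rpow_pos_of_pos hL _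
        rw [← add_div, div_mul_eq_mul_div, le_div_iff₀ h1β, add_mul,
          div_mul_cancel₀ _ h1β.ne']
        nlinarith [hP, hβ.1]

/-- Bound for the inner integral against one bump function. -/
lemma inner_bound (β : ℝ) (hβ : β ∈ Set.Ioo (0:ℝ) 1) (δ' b c : ℝ) (hδ' : 0 < δ')
    (s : Set ℝ) :
    ∫⁻ x in s, ENNReal.ofReal (phiApprox δ' (b - x) * |x - c| ^ (-β))
      ≤ ENNReal.ofReal (3 / (1 - β) * δ' ^ (-β)) := by
  have h1β : (0:ℝ) < 1 - β := by linarith [hβ.2]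
  simp_rw [phi_eq_indicator δ' b (fun x => |x - c| ^ (-β))]
  rw [lintegral_indicator measurableSet_Icc]
  rw [Measure.restrict_restrict measurableSet_Icc]
  calc ∫⁻ x in Set.Icc (b - δ') b ∩ s, ENNReal.ofReal (δ'⁻¹ * |x - c| ^ (-β))
      ≤ ∫⁻ x in Set.Icc (b - δ') b, ENNReal.ofReal (δ'⁻¹ * |x - c| ^ (-β)) :=
        lintegral_mono_set Set.inter_subset_left
    _ = ENNReal.ofReal δ'⁻¹ * ∫⁻ x in Set.Icc (b - δ') b, ENNReal.ofReal (|x - c| ^ (-β)) := by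
        simp_rw [ENNReal.ofReal_mul (by positivity : (0:ℝ) ≤ δ'⁻¹)]
        exact lintegral_const_mul' _ _ ENNReal.ofReal_ne_top
    _ ≤ ENNReal.ofReal δ'⁻¹ * ENNReal.ofReal (3 / (1 - β) * δ' ^ (1 - β)) := by
        gcongr
        have h : Set.Icc (b - δ') b = Set.Icc (b - δ') ((b - δ') + δ') := by ring_nf
        rw [h]
        exact window β hβ c (b - δ') δ' hδ'
    _ = ENNReal.ofReal (3 / (1 - β) * δ' ^ (-β)) := by
        rw [← ENNReal.ofReal_mul (by positivity)]
        congr 1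
        rw [← Real.rpow_neg_one δ', mul_comm, mul_assoc, ← Real.rpow_add hδ',
          show (1 - β) + (-1) = -β by ring]
  
/-- The full double-integral bound in terms of `δ'`. -/
lemma double_bound (β : ℝ) (hβ : β ∈ Set.Ioo (0:ℝ) 1) (t δ δ' a b : ℝ)
    (hδ : 0 < δ) (hδ' : 0 < δ') :
    ∫⁻ r₁ in Set.Icc (0:ℝ) t, ∫⁻ r₂ in Set.Icc (0:ℝ) t,
        ENNReal.ofReal (phiApprox δ (a - r₁) * phiApprox δ' (b - r₂) * |r₁ - r₂| ^ (-β))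
      ≤ ENNReal.ofReal (3 / (1 - β) * δ' ^ (-β)) := by
  calc ∫⁻ r₁ in Set.Icc (0:ℝ) t, ∫⁻ r₂ in Set.Icc (0:ℝ) t,
        ENNReal.ofReal (phiApprox δ (a - r₁) * phiApprox δ' (b - r₂) * |r₁ - r₂| ^ (-β))
      ≤ ∫⁻ r₁ in Set.Icc (0:ℝ) t,
          ENNReal.ofReal (phiApprox δ (a - r₁)) * ENNReal.ofReal (3 / (1 - β) * δ' ^ (-β)) := by
        refine lintegral_mono fun r₁ => ?_
        have heq : ∀ r₂ : ℝ, ENNReal.ofReal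
              (phiApprox δ (a - r₁) * phiApprox δ' (b - r₂) * |r₁ - r₂| ^ (-β))
            = ENNReal.ofReal (phiApprox δ (a - r₁))
              * ENNReal.ofReal (phiApprox δ' (b - r₂) * |r₂ - r₁| ^ (-β)) := by
          intro r₂
          rw [mul_assoc, ENNReal.ofReal_mul (phi_nonneg δ hδ _), abs_sub_comm]
        simp_rw [heq]
        rw [lintegral_const_mul' _ _ ENNReal.ofReal_ne_top]
        gcongr
        exact inner_bound β hβ δ' b r₁ hδ' _
    _ = (∫⁻ r₁ in Set.Icc (0:ℝ) t, ENNReal.ofReal (phiApprox δ (a - r₁)))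
          * ENNReal.ofReal (3 / (1 - β) * δ' ^ (-β)) :=
        lintegral_mul_const' _ _ ENNReal.ofReal_ne_top
    _ ≤ 1 * ENNReal.ofReal (3 / (1 - β) * δ' ^ (-β)) := by
        gcongr
        exact mass δ a hδ _
    _ = ENNReal.ofReal (3 / (1 - β) * δ' ^ (-β)) := one_mul _

end PhiAux

/-- For `β ∈ (0,1)` there is `C > 0` such that for all `t > 0`, `δ, δ' > 0` and
`s₁ ≠ s₂` in `[0, t]`,
`∫₀^t ∫₀^t φ_δ(t−s₁−r₁) φ_{δ'}(t−s₂−r₂) |r₁−r₂|^{-β} dr₁ dr₂ ≤ C |s₁−s₂|^{-β}`. -/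
theorem phiApprox_convolution_bound (β : ℝ) (hβ : β ∈ Set.Ioo (0 : ℝ) 1) :
    ∃ C : ℝ, 0 < C ∧ ∀ t δ δ' s₁ s₂ : ℝ, 0 < t → 0 < δ → 0 < δ' →
      s₁ ∈ Set.Icc 0 t → s₂ ∈ Set.Icc 0 t → s₁ ≠ s₂ →
      (∫⁻ r₁ in Set.Icc (0 : ℝ) t, ∫⁻ r₂ in Set.Icc (0 : ℝ) t,
          ENNReal.ofReal (phiApprox δ (t - s₁ - r₁) * phiApprox δ' (t - s₂ - r₂) *
            |r₁ - r₂| ^ (-β))) ≤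
        ENNReal.ofReal (C * |s₁ - s₂| ^ (-β)) := by
  obtain ⟨hβ0, hβ1⟩ := hβ
  have h1β : (0:ℝ) < 1 - β := by linarith
  refine ⟨16 / (1 - β), by positivity, ?_⟩
  intro t δ δ' s₁ s₂ ht hδ hδ' hs₁ hs₂ hne
  set c := |s₁ - s₂| with hcdef
  have hc : 0 < c := abs_pos.mpr (sub_ne_zero.mpr hne)
  have hcpow : (0:ℝ) < c ^ (-β) := Real.rpow_pos_of_pos hc _
  rcases le_or_gt c (2 * (δ + δ')) with hcase | hcase
  · -- overlapping case: bound via the larger of δ, δ'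
    rcases le_total δ δ' with hdd | hdd
    · -- δ ≤ δ', use double_bound directly with δ'
      have h4 : c / 4 ≤ δ' := by linarith
      refine (PhiAux.double_bound β ⟨hβ0, hβ1⟩ t δ δ' (t - s₁) (t - s₂) hδ hδ').trans ?_
      refine ENNReal.ofReal_le_ofReal ?_
      have hpow : δ' ^ (-β) ≤ 4 * c ^ (-β) := by
        have h1 : δ' ^ (-β) ≤ (c / 4) ^ (-β) :=
          Real.rpow_le_rpow_of_nonpos (by positivity) h4 (by linarith)
        have h2 : (c / 4) ^ (-β) = c ^ (-β) * (4:ℝ) ^ β := by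
          rw [Real.div_rpow hc.le (by norm_num), Real.rpow_neg (by norm_num : (0:ℝ) ≤ 4),
            div_inv_eq_mul]
        have h3 : (4:ℝ) ^ β ≤ 4 := by
          calc (4:ℝ) ^ β ≤ (4:ℝ) ^ (1:ℝ) :=
            Real.rpow_le_rpow_of_exponent_le (by norm_num) (by linarith)
          _ = 4 := Real.rpow_one 4
        calc δ' ^ (-β) ≤ c ^ (-β) * (4:ℝ) ^ β := h2 ▸ h1
          _ ≤ c ^ (-β) * 4 := by nlinarith [hcpow, h3]
          _ = 4 * c ^ (-β) := by ring
      calc 3 / (1 - β) * δ' ^ (-β) ≤ 3 / (1 - β) * (4 * c ^ (-β)) := by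
            gcongr
        _ = 12 / (1 - β) * c ^ (-β) := by ring
        _ ≤ 16 / (1 - β) * c ^ (-β) := by gcongr <;> norm_num
    · -- δ' ≤ δ: swap the order of integration
      have h4 : c / 4 ≤ δ := by linarith
      have hswap : (∫⁻ r₁ in Set.Icc (0 : ℝ) t, ∫⁻ r₂ in Set.Icc (0 : ℝ) t,
            ENNReal.ofReal (phiApprox δ (t - s₁ - r₁) * phiApprox δ' (t - s₂ - r₂) *
              |r₁ - r₂| ^ (-β)))
          = ∫⁻ r₂ in Set.Icc (0 : ℝ) t, ∫⁻ r₁ in Set.Icc (0 : ℝ) t,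
            ENNReal.ofReal (phiApprox δ' (t - s₂ - r₂) * phiApprox δ (t - s₁ - r₁) *
              |r₂ - r₁| ^ (-β)) := by
        have hmeas : AEMeasurable (Function.uncurry fun r₁ r₂ : ℝ =>
            ENNReal.ofReal (phiApprox δ (t - s₁ - r₁) * phiApprox δ' (t - s₂ - r₂) *
              |r₁ - r₂| ^ (-β)))
            ((volume.restrict (Set.Icc (0:ℝ) t)).prod (volume.restrict (Set.Icc (0:ℝ) t))) := by
          refine Measurable.aemeasurable ?_
          refine ENNReal.measurable_ofReal.comp ?_
          exact (((PhiAux.phi_measurable δ).comp (measurable_const.sub measurable_fst)).mul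
            ((PhiAux.phi_measurable δ').comp (measurable_const.sub measurable_snd))).mul
            ((PhiAux.abs_rpow_measurable β (by linarith)).comp
              (measurable_fst.sub measurable_snd))
        rw [lintegral_lintegral_swap hmeas]
        congr 1
        ext r₂
        congr 1
        ext r₁
        rw [abs_sub_comm]
        ring_nf
      rw [hswap]
      have hseq : ∀ r₂ r₁ : ℝ, (t - s₂ - r₂) = ((t - s₂) - r₂) := fun _ _ => rfl
      refine (PhiAux.double_bound β ⟨hβ0, hβ1⟩ t δ' δ (t - s₂) (t - s₁) hδ' hδ).trans ?_
      refine ENNReal.ofReal_le_ofReal ?_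
      have hpow : δ ^ (-β) ≤ 4 * c ^ (-β) := by
        have h1 : δ ^ (-β) ≤ (c / 4) ^ (-β) :=
          Real.rpow_le_rpow_of_nonpos (by positivity) h4 (by linarith)
        have h2 : (c / 4) ^ (-β) = c ^ (-β) * (4:ℝ) ^ β := by
          rw [Real.div_rpow hc.le (by norm_num), Real.rpow_neg (by norm_num : (0:ℝ) ≤ 4),
            div_inv_eq_mul]
        have h3 : (4:ℝ) ^ β ≤ 4 := by
          calc (4:ℝ) ^ β ≤ (4:ℝ) ^ (1:ℝ) :=
            Real.rpow_le_rpow_of_exponent_le (by norm_num) (by linarith)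
          _ = 4 := Real.rpow_one 4
        calc δ ^ (-β) ≤ c ^ (-β) * (4:ℝ) ^ β := h2 ▸ h1
          _ ≤ c ^ (-β) * 4 := by nlinarith [hcpow, h3]
          _ = 4 * c ^ (-β) := by ring
      calc 3 / (1 - β) * δ ^ (-β) ≤ 3 / (1 - β) * (4 * c ^ (-β)) := by
            gcongr
        _ = 12 / (1 - β) * c ^ (-β) := by ring
        _ ≤ 16 / (1 - β) * c ^ (-β) := by gcongr <;> norm_num
  · -- separated case: |r₁ - r₂| ≥ c/2 on the support
    have hc2 : (0:ℝ) < c / 2 := by linarith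
    have hpt : ∀ r₁ r₂ : ℝ,
        ENNReal.ofReal (phiApprox δ (t - s₁ - r₁) * phiApprox δ' (t - s₂ - r₂) *
            |r₁ - r₂| ^ (-β))
          ≤ ENNReal.ofReal (phiApprox δ (t - s₁ - r₁))
            * (ENNReal.ofReal (phiApprox δ' (t - s₂ - r₂))
              * ENNReal.ofReal ((c / 2) ^ (-β))) := by
      intro r₁ r₂
      by_cases h1 : t - s₁ - r₁ ∈ Set.Icc 0 δ
      · by_cases h2 : t - s₂ - r₂ ∈ Set.Icc 0 δ' 
        · -- both in support
          have hdist : c / 2 ≤ |r₁ - r₂| := by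
            obtain ⟨h1a, h1b⟩ := h1
            obtain ⟨h2a, h2b⟩ := h2
            have : c ≤ |s₁ - s₂| := le_of_eq hcdef
            rcases abs_sub_le_iff.mp (le_refl |s₁ - s₂|) with _
            -- |r₁ - r₂| ≥ |s₂ - s₁| - (δ + δ') ≥ c - c/2
            have key : |s₁ - s₂| - (δ + δ') ≤ |r₁ - r₂| := by
              have heq : r₁ - r₂ = (s₂ - s₁) + ((t - s₂ - r₂) - (t - s₁ - r₁)) := by ring
              have habs : |(t - s₂ - r₂) - (t - s₁ - r₁)| ≤ δ + δ' := by
                rw [abs_sub_le_iff]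
                constructor <;> linarith
              have h5 : |s₂ - s₁| ≤ |r₁ - r₂| + |(t - s₂ - r₂) - (t - s₁ - r₁)| := by
                calc |s₂ - s₁| = |(r₁ - r₂) - ((t - s₂ - r₂) - (t - s₁ - r₁))| := by
                      congr 1; ring
                  _ ≤ |r₁ - r₂| + |(t - s₂ - r₂) - (t - s₁ - r₁)| := abs_sub _ _
              rw [abs_sub_comm s₁ s₂]
              linarith
            linarith
          have hrpow : |r₁ - r₂| ^ (-β) ≤ (c / 2) ^ (-β) :=
            Real.rpow_le_rpow_of_nonpos hc2 hdist (by linarith)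
          rw [← ENNReal.ofReal_mul (PhiAux.phi_nonneg δ' hδ' _),
            ← ENNReal.ofReal_mul (PhiAux.phi_nonneg δ hδ _), ← mul_assoc]
          refine ENNReal.ofReal_le_ofReal ?_
          exact mul_le_mul_of_nonneg_left hrpow
            (mul_nonneg (PhiAux.phi_nonneg δ hδ _) (PhiAux.phi_nonneg δ' hδ' _))
        · -- second bump vanishes
          have : phiApprox δ' (t - s₂ - r₂) = 0 := by unfold phiApprox; rw [if_neg h2]
          simp [this]
      · -- first bump vanishes
        have : phiApprox δ (t - s₁ - r₁) = 0 := by unfold phiApprox; rw [if_neg h1]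
        simp [this]
    calc (∫⁻ r₁ in Set.Icc (0 : ℝ) t, ∫⁻ r₂ in Set.Icc (0 : ℝ) t,
          ENNReal.ofReal (phiApprox δ (t - s₁ - r₁) * phiApprox δ' (t - s₂ - r₂) *
            |r₁ - r₂| ^ (-β)))
        ≤ ∫⁻ r₁ in Set.Icc (0 : ℝ) t,
            ENNReal.ofReal (phiApprox δ (t - s₁ - r₁))
              * ((∫⁻ r₂ in Set.Icc (0 : ℝ) t, ENNReal.ofReal (phiApprox δ' (t - s₂ - r₂)))
                * ENNReal.ofReal ((c / 2) ^ (-β))) := by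
          refine lintegral_mono fun r₁ => ?_
          calc ∫⁻ r₂ in Set.Icc (0 : ℝ) t,
              ENNReal.ofReal (phiApprox δ (t - s₁ - r₁) * phiApprox δ' (t - s₂ - r₂) *
                |r₁ - r₂| ^ (-β))
              ≤ ∫⁻ r₂ in Set.Icc (0 : ℝ) t,
                ENNReal.ofReal (phiApprox δ (t - s₁ - r₁))
                  * (ENNReal.ofReal (phiApprox δ' (t - s₂ - r₂))
                    * ENNReal.ofReal ((c / 2) ^ (-β))) :=
                lintegral_mono fun r₂ => hpt r₁ r₂
            _ = ENNReal.ofReal (phiApprox δ (t - s₁ - r₁))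
                  * ∫⁻ r₂ in Set.Icc (0 : ℝ) t,
                    ENNReal.ofReal (phiApprox δ' (t - s₂ - r₂))
                      * ENNReal.ofReal ((c / 2) ^ (-β)) :=
                lintegral_const_mul' _ _ ENNReal.ofReal_ne_top
            _ = ENNReal.ofReal (phiApprox δ (t - s₁ - r₁))
                  * ((∫⁻ r₂ in Set.Icc (0 : ℝ) t, ENNReal.ofReal (phiApprox δ' (t - s₂ - r₂)))
                    * ENNReal.ofReal ((c / 2) ^ (-β))) := by
                rw [lintegral_mul_const' _ _ ENNReal.ofReal_ne_top]
      _ ≤ ∫⁻ r₁ in Set.Icc (0 : ℝ) t,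
            ENNReal.ofReal (phiApprox δ (t - s₁ - r₁))
              * (1 * ENNReal.ofReal ((c / 2) ^ (-β))) := by
          refine lintegral_mono fun r₁ => ?_
          gcongr
          exact PhiAux.mass δ' (t - s₂) hδ' _
      _ = (∫⁻ r₁ in Set.Icc (0 : ℝ) t, ENNReal.ofReal (phiApprox δ (t - s₁ - r₁)))
            * ENNReal.ofReal ((c / 2) ^ (-β)) := by
          simp_rw [one_mul]
          exact lintegral_mul_const' _ _ ENNReal.ofReal_ne_top
      _ ≤ 1 * ENNReal.ofReal ((c / 2) ^ (-β)) := by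
          gcongr
          exact PhiAux.mass δ (t - s₁) hδ _
      _ ≤ ENNReal.ofReal (16 / (1 - β) * c ^ (-β)) := by
          rw [one_mul]
          refine ENNReal.ofReal_le_ofReal ?_
          have h2 : (c / 2) ^ (-β) = c ^ (-β) * (2:ℝ) ^ β := by
            rw [Real.div_rpow hc.le (by norm_num), Real.rpow_neg (by norm_num : (0:ℝ) ≤ 2),
              div_inv_eq_mul]
          have h3 : (2:ℝ) ^ β ≤ 2 := by
            calc (2:ℝ) ^ β ≤ (2:ℝ) ^ (1:ℝ) :=
              Real.rpow_le_rpow_of_exponent_le (by norm_num) (by linarith)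
            _ = 2 := Real.rpow_one 2
          rw [h2]
          have h16 : (2:ℝ) ≤ 16 / (1 - β) := by
            rw [le_div_iff₀ h1β]; nlinarith
          nlinarith [hcpow]
end

section
/- Let α ∈ (0, 2), let κ ∈ (0, 2/α), and let t > 0. There exists a constant C > 0 such that for every h > 0, ∫∫_{{(r,v) ∈ [0,t]² : |r − v| ≤ h^α}} |r − v|^{κ − 1} dr dv + h² ∫∫_{{(r,v) ∈ [0,t]² : |r − v| > h^α}} |r − v|^{κ − 1 − 2/α} dr dv ≤ C h^{ακ}. -/
open MeasureTheory Set
open scoped ENNReal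

/-- reflection -/
lemma lint_reflect (s : Set ℝ) (β : ℝ) :
    ∫⁻ u in (fun x : ℝ => -x) ⁻¹' s, ENNReal.ofReal (|u| ^ β) =
      ∫⁻ u in s, ENNReal.ofReal (|u| ^ β) := by
  have hm : Measurable fun u : ℝ => ENNReal.ofReal (|u| ^ β) := by fun_prop
  have h := (Measure.measurePreserving_neg (volume : Measure ℝ)).setLIntegral_comp_preimage_emb
    (MeasurableEquiv.neg ℝ).measurableEmbedding (fun u : ℝ => ENNReal.ofReal (|u| ^ β)) s
  simpa [abs_neg] using h

lemma lint_Ioc (δ β : ℝ) (hδ : 0 < δ) (hβ : -1 < β) :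
    ∫⁻ u in Set.Ioc 0 δ, ENNReal.ofReal (|u| ^ β) ≤ ENNReal.ofReal (δ ^ (β + 1) / (β + 1)) := by
  have hcong : ∫⁻ u in Set.Ioc 0 δ, ENNReal.ofReal (|u| ^ β)
      = ∫⁻ u in Set.Ioc 0 δ, ENNReal.ofReal (u ^ β) := by
    refine setLIntegral_congr_fun measurableSet_Ioc ?_
    intro u hu; simp only [abs_of_pos hu.1]
  rw [hcong]
  have hint : IntegrableOn (fun u : ℝ => u ^ β) (Set.Ioc 0 δ) := by
    have := intervalIntegral.intervalIntegrable_rpow' (a := 0) (b := δ) hβ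
    rwa [intervalIntegrable_iff_integrableOn_Ioc_of_le hδ.le] at this
  have hnn : 0 ≤ᵐ[volume.restrict (Set.Ioc 0 δ)] fun u : ℝ => u ^ β := by
    filter_upwards [ae_restrict_mem measurableSet_Ioc] with u hu
    exact Real.rpow_nonneg hu.1.le β
  rw [← ofReal_integral_eq_lintegral_ofReal hint hnn]
  apply ENNReal.ofReal_le_ofReal
  rw [← intervalIntegral.integral_of_le hδ.le, integral_rpow (Or.inl hβ)]
  rw [Real.zero_rpow (by linarith)]
  ring_nf; exact le_refl _

lemma lint_Ioi (δ β : ℝ) (hδ : 0 < δ) (hβ : β < -1) :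
    ∫⁻ u in Set.Ioi δ, ENNReal.ofReal (|u| ^ β) ≤
      ENNReal.ofReal (δ ^ (β + 1) / (-(β + 1))) := by
  have hcong : ∫⁻ u in Set.Ioi δ, ENNReal.ofReal (|u| ^ β)
      = ∫⁻ u in Set.Ioi δ, ENNReal.ofReal (u ^ β) := by
    refine setLIntegral_congr_fun measurableSet_Ioi ?_
    intro u hu; simp only [abs_of_pos (hδ.trans hu)]
  rw [hcong]
  have hint : IntegrableOn (fun u : ℝ => u ^ β) (Set.Ioi δ) :=
    integrableOn_Ioi_rpow_of_lt hβ hδ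
  have hnn : 0 ≤ᵐ[volume.restrict (Set.Ioi δ)] fun u : ℝ => u ^ β := by
    filter_upwards [ae_restrict_mem measurableSet_Ioi] with u hu
    exact Real.rpow_nonneg (hδ.le.trans hu.le) β
  rw [← ofReal_integral_eq_lintegral_ofReal hint hnn]
  apply ENNReal.ofReal_le_ofReal
  rw [integral_Ioi_rpow_of_lt hβ hδ]
  rw [neg_div, div_neg]

lemma lint_abs_le (δ β : ℝ) (hδ : 0 < δ) (hβ : -1 < β) :
    ∫⁻ u in {u : ℝ | |u| ≤ δ}, ENNReal.ofReal (|u| ^ β) ≤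
      ENNReal.ofReal (2 * (δ ^ (β + 1) / (β + 1))) := by
  have hset : {u : ℝ | |u| ≤ δ} = Set.Icc (-δ) 0 ∪ Set.Ioc 0 δ := by
    ext u; simp only [mem_setOf_eq, abs_le, mem_union, mem_Icc, mem_Ioc]
    constructor
    · rintro ⟨h1, h2⟩; rcases le_or_gt u 0 with h | h
      · exact Or.inl ⟨h1, h⟩
      · exact Or.inr ⟨h, h2⟩
    · rintro (⟨h1, h2⟩ | ⟨h1, h2⟩) <;> constructor <;> linarith
  rw [hset]
  calc ∫⁻ u in Set.Icc (-δ) 0 ∪ Set.Ioc 0 δ, ENNReal.ofReal (|u| ^ β)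
      ≤ (∫⁻ u in Set.Icc (-δ) 0, ENNReal.ofReal (|u| ^ β)) +
        ∫⁻ u in Set.Ioc 0 δ, ENNReal.ofReal (|u| ^ β) := lintegral_union_le _ _ _
    _ ≤ ENNReal.ofReal (δ ^ (β + 1) / (β + 1)) + ENNReal.ofReal (δ ^ (β + 1) / (β + 1)) := by
        gcongr ?_ + ?_
        · have hpre : Set.Icc (-δ) 0 = (fun x : ℝ => -x) ⁻¹' Set.Icc 0 δ := by
            ext u; simp only [mem_Icc, mem_preimage]; constructor <;> intro h <;>
              constructor <;> linarith [h.1, h.2]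
          rw [hpre, lint_reflect]
          have : ∫⁻ u in Set.Icc 0 δ, ENNReal.ofReal (|u| ^ β)
              = ∫⁻ u in Set.Ioc 0 δ, ENNReal.ofReal (|u| ^ β) :=
            setLIntegral_congr (Ioc_ae_eq_Icc).symm
          rw [this]; exact lint_Ioc δ β hδ hβ
        · exact lint_Ioc δ β hδ hβ
    _ ≤ ENNReal.ofReal (2 * (δ ^ (β + 1) / (β + 1))) := by
        have hnn : 0 ≤ δ ^ (β + 1) / (β + 1) :=
          div_nonneg (Real.rpow_nonneg hδ.le _) (by linarith)
        rw [← ENNReal.ofReal_add hnn hnn]; apply ENNReal.ofReal_le_ofReal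
        ring_nf; exact le_refl _

lemma lint_abs_gt (δ β : ℝ) (hδ : 0 < δ) (hβ : β < -1) :
    ∫⁻ u in {u : ℝ | δ < |u|}, ENNReal.ofReal (|u| ^ β) ≤
      ENNReal.ofReal (2 * (δ ^ (β + 1) / (-(β + 1)))) := by
  have hset : {u : ℝ | δ < |u|} = Set.Iio (-δ) ∪ Set.Ioi δ := by
    ext u; simp only [mem_setOf_eq, lt_abs, mem_union, mem_Iio, mem_Ioi]
    constructor
    · rintro (h | h); exacts [Or.inr h, Or.inl (by linarith)]
    · rintro (h | h); exacts [Or.inr (by linarith), Or.inl h]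
  rw [hset]
  calc ∫⁻ u in Set.Iio (-δ) ∪ Set.Ioi δ, ENNReal.ofReal (|u| ^ β)
      ≤ (∫⁻ u in Set.Iio (-δ), ENNReal.ofReal (|u| ^ β)) +
        ∫⁻ u in Set.Ioi δ, ENNReal.ofReal (|u| ^ β) := lintegral_union_le _ _ _
    _ ≤ ENNReal.ofReal (δ ^ (β + 1) / (-(β + 1))) + ENNReal.ofReal (δ ^ (β + 1) / (-(β + 1))) := by
        gcongr ?_ + ?_
        · have hpre : Set.Iio (-δ) = (fun x : ℝ => -x) ⁻¹' Set.Ioi δ := by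
            ext u; simp only [mem_Iio, mem_preimage, mem_Ioi]; constructor <;> intro h <;> linarith
          rw [hpre, lint_reflect]; exact lint_Ioi δ β hδ hβ
        · exact lint_Ioi δ β hδ hβ
    _ ≤ ENNReal.ofReal (2 * (δ ^ (β + 1) / (-(β + 1)))) := by
        have hnn : 0 ≤ δ ^ (β + 1) / (-(β + 1)) :=
          div_nonneg (Real.rpow_nonneg hδ.le _) (by linarith)
        rw [← ENNReal.ofReal_add hnn hnn]; apply ENNReal.ofReal_le_ofReal
        ring_nf; exact le_refl _

lemma strip_bound (t : ℝ) (ht : 0 ≤ t) (G : ℝ → ℝ≥0∞) (hG : Measurable G)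
    (hGeven : ∀ u, G (-u) = G u)
    (S : Set (ℝ × ℝ)) (hS : MeasurableSet S)
    (hS1 : ∀ p ∈ S, p.1 ∈ Set.Icc (0:ℝ) t)
    (f : ℝ × ℝ → ℝ≥0∞) (hfG : ∀ p ∈ S, f p ≤ G (p.1 - p.2)) :
    ∫⁻ p in S, f p ≤ ENNReal.ofReal t * ∫⁻ u, G u := by
  have h1 : ∫⁻ p in S, f p ≤ ∫⁻ p in S, G (p.1 - p.2) :=
    setLIntegral_mono' hS hfG
  have h2 : ∫⁻ p in S, G (p.1 - p.2) ≤
      ∫⁻ p in Set.Icc (0:ℝ) t ×ˢ (Set.univ : Set ℝ), G (p.1 - p.2) := by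
    apply lintegral_mono_set
    intro p hp
    exact ⟨hS1 p hp, trivial⟩
  refine h1.trans (h2.trans ?_)
  rw [Measure.volume_eq_prod, ← Measure.prod_restrict, Measure.restrict_univ]
  rw [lintegral_prod]
  · have hinner : ∀ r : ℝ, (∫⁻ v, G (r - v)) = ∫⁻ u, G u := by
      intro r
      have : ∀ v : ℝ, G (r - v) = G (v - r) := by
        intro v; rw [← hGeven (v - r)]; ring_nf
      simp_rw [this]
      exact lintegral_sub_right_eq_self G r
    simp_rw [hinner]
    rw [setLIntegral_const, Real.volume_Icc, sub_zero, mul_comm]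
  · exact (hG.comp (measurable_fst.sub measurable_snd)).aemeasurable


/-- The spatial-increment estimate: for `α ∈ (0,2)`, `κ ∈ (0, 2/α)` and `t > 0` there is
`C > 0` such that for all `h > 0`,
`∫∫_{|r−v|≤h^α} |r−v|^{κ−1} + h² ∫∫_{|r−v|>h^α} |r−v|^{κ−1−2/α} ≤ C h^{ακ}`. -/
theorem spatial_increment_estimate (α κ t : ℝ) (hα : α ∈ Set.Ioo (0 : ℝ) 2)
    (hκ : κ ∈ Set.Ioo (0 : ℝ) (2 / α)) (ht : 0 < t) :
    ∃ C : ℝ, 0 < C ∧ ∀ h : ℝ, 0 < h →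
      (∫⁻ p in {p : ℝ × ℝ | p.1 ∈ Set.Icc 0 t ∧ p.2 ∈ Set.Icc 0 t ∧ |p.1 - p.2| ≤ h ^ α},
          ENNReal.ofReal (|p.1 - p.2| ^ (κ - 1))) +
        ENNReal.ofReal (h ^ 2) *
          (∫⁻ p in {p : ℝ × ℝ | p.1 ∈ Set.Icc 0 t ∧ p.2 ∈ Set.Icc 0 t ∧ h ^ α < |p.1 - p.2|},
            ENNReal.ofReal (|p.1 - p.2| ^ (κ - 1 - 2 / α))) ≤
      ENNReal.ofReal (C * h ^ (α * κ)) := by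
  obtain ⟨hα0, hα2⟩ := hα
  obtain ⟨hκ0, hκ2⟩ := hκ
  have hd : 0 < 2 / α - κ := by linarith
  refine ⟨2 * t / κ + 2 * t / (2 / α - κ), by positivity, ?_⟩
  intro h hh
  set δ : ℝ := h ^ α with hδdef
  have hδ0 : 0 < δ := Real.rpow_pos_of_pos hh α
  -- measurability of the carrier sets
  have hmeas1 : MeasurableSet {u : ℝ | |u| ≤ δ} :=
    measurableSet_le (by fun_prop) measurable_const
  have hmeas2 : MeasurableSet {u : ℝ | δ < |u|} :=
    measurableSet_lt measurable_const (by fun_prop)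
  -- the two even majorant functions
  set G₁ : ℝ → ℝ≥0∞ :=
    {u : ℝ | |u| ≤ δ}.indicator fun u => ENNReal.ofReal (|u| ^ (κ - 1)) with hG₁
  set G₂ : ℝ → ℝ≥0∞ :=
    {u : ℝ | δ < |u|}.indicator fun u => ENNReal.ofReal (|u| ^ (κ - 1 - 2 / α)) with hG₂
  have hG₁m : Measurable G₁ := Measurable.indicator (by fun_prop) hmeas1
  have hG₂m : Measurable G₂ := Measurable.indicator (by fun_prop) hmeas2
  have hG₁e : ∀ u, G₁ (-u) = G₁ u := by
    intro u; simp [hG₁, Set.indicator, abs_neg]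
  have hG₂e : ∀ u, G₂ (-u) = G₂ u := by
    intro u; simp [hG₂, Set.indicator, abs_neg]
  -- first term
  have hS₁ : MeasurableSet {p : ℝ × ℝ | p.1 ∈ Set.Icc 0 t ∧ p.2 ∈ Set.Icc 0 t ∧
      |p.1 - p.2| ≤ δ} := by
    have : {p : ℝ × ℝ | p.1 ∈ Set.Icc 0 t ∧ p.2 ∈ Set.Icc 0 t ∧ |p.1 - p.2| ≤ δ}
        = ((fun p : ℝ × ℝ => p.1) ⁻¹' Set.Icc 0 t) ∩
          (((fun p : ℝ × ℝ => p.2) ⁻¹' Set.Icc 0 t) ∩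
            ((fun p : ℝ × ℝ => |p.1 - p.2|) ⁻¹' Set.Iic δ)) := rfl
    rw [this]
    exact (measurable_fst measurableSet_Icc).inter
      ((measurable_snd measurableSet_Icc).inter
        (((measurable_fst.sub measurable_snd).abs) measurableSet_Iic))
  have hS₂ : MeasurableSet {p : ℝ × ℝ | p.1 ∈ Set.Icc 0 t ∧ p.2 ∈ Set.Icc 0 t ∧
      δ < |p.1 - p.2|} := by
    have : {p : ℝ × ℝ | p.1 ∈ Set.Icc 0 t ∧ p.2 ∈ Set.Icc 0 t ∧ δ < |p.1 - p.2|}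
        = ((fun p : ℝ × ℝ => p.1) ⁻¹' Set.Icc 0 t) ∩
          (((fun p : ℝ × ℝ => p.2) ⁻¹' Set.Icc 0 t) ∩
            ((fun p : ℝ × ℝ => |p.1 - p.2|) ⁻¹' Set.Ioi δ)) := rfl
    rw [this]
    exact (measurable_fst measurableSet_Icc).inter
      ((measurable_snd measurableSet_Icc).inter
        (((measurable_fst.sub measurable_snd).abs) measurableSet_Ioi))
  have hT₁ : (∫⁻ p in {p : ℝ × ℝ | p.1 ∈ Set.Icc 0 t ∧ p.2 ∈ Set.Icc 0 t ∧
        |p.1 - p.2| ≤ δ}, ENNReal.ofReal (|p.1 - p.2| ^ (κ - 1)))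
      ≤ ENNReal.ofReal t * ∫⁻ u, G₁ u := by
    refine strip_bound t ht.le G₁ hG₁m hG₁e _ hS₁ (fun p hp => hp.1) _ (fun p hp => ?_)
    exact le_of_eq (Set.indicator_of_mem (show p.1 - p.2 ∈ {u : ℝ | |u| ≤ δ} from hp.2.2)
      (fun u => ENNReal.ofReal (|u| ^ (κ - 1)))).symm
  have hT₂ : (∫⁻ p in {p : ℝ × ℝ | p.1 ∈ Set.Icc 0 t ∧ p.2 ∈ Set.Icc 0 t ∧
        δ < |p.1 - p.2|}, ENNReal.ofReal (|p.1 - p.2| ^ (κ - 1 - 2 / α)))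
      ≤ ENNReal.ofReal t * ∫⁻ u, G₂ u := by
    refine strip_bound t ht.le G₂ hG₂m hG₂e _ hS₂ (fun p hp => hp.1) _ (fun p hp => ?_)
    exact le_of_eq (Set.indicator_of_mem (show p.1 - p.2 ∈ {u : ℝ | δ < |u|} from hp.2.2)
      (fun u => ENNReal.ofReal (|u| ^ (κ - 1 - 2 / α)))).symm
  -- 1D bounds
  have hB₁ : (∫⁻ u, G₁ u) ≤ ENNReal.ofReal (2 * (δ ^ κ / κ)) := by
    rw [hG₁, lintegral_indicator hmeas1 _]
    have := lint_abs_le δ (κ - 1) hδ0 (by linarith)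
    rwa [show κ - 1 + 1 = κ by ring] at this
  have hB₂ : (∫⁻ u, G₂ u) ≤ ENNReal.ofReal (2 * (δ ^ (κ - 2 / α) / (-(κ - 2 / α)))) := by
    rw [hG₂, lintegral_indicator hmeas2 _]
    have := lint_abs_gt δ (κ - 1 - 2 / α) hδ0 (by linarith)
    rwa [show κ - 1 - 2 / α + 1 = κ - 2 / α by ring] at this
  -- combine
  have key : t * (2 * (δ ^ κ / κ)) + h ^ 2 * (t * (2 * (δ ^ (κ - 2 / α) / (-(κ - 2 / α)))))
      = (2 * t / κ + 2 * t / (2 / α - κ)) * h ^ (α * κ) := by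
    have h1 : δ ^ κ = h ^ (α * κ) := by
      rw [hδdef, ← Real.rpow_mul hh.le]
    have h2 : δ ^ (κ - 2 / α) = h ^ (α * κ - 2) := by
      rw [hδdef, ← Real.rpow_mul hh.le]
      congr 1
      field_simp
    have h3 : h ^ 2 * h ^ (α * κ - 2) = h ^ (α * κ) := by
      rw [← Real.rpow_natCast h 2, ← Real.rpow_add hh]
      congr 1
      push_cast
      ring
    rw [h1, h2]
    linear_combination (2 * t / (2 / α - κ)) * h3
  calc (∫⁻ p in {p : ℝ × ℝ | p.1 ∈ Set.Icc 0 t ∧ p.2 ∈ Set.Icc 0 t ∧ |p.1 - p.2| ≤ δ},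
          ENNReal.ofReal (|p.1 - p.2| ^ (κ - 1))) +
        ENNReal.ofReal (h ^ 2) *
          (∫⁻ p in {p : ℝ × ℝ | p.1 ∈ Set.Icc 0 t ∧ p.2 ∈ Set.Icc 0 t ∧ δ < |p.1 - p.2|},
            ENNReal.ofReal (|p.1 - p.2| ^ (κ - 1 - 2 / α)))
      ≤ ENNReal.ofReal t * ENNReal.ofReal (2 * (δ ^ κ / κ)) +
        ENNReal.ofReal (h ^ 2) *
          (ENNReal.ofReal t * ENNReal.ofReal (2 * (δ ^ (κ - 2 / α) / (-(κ - 2 / α))))) := by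
        gcongr
        · exact hT₁.trans (by gcongr)
        · exact hT₂.trans (by gcongr)
    _ = ENNReal.ofReal (t * (2 * (δ ^ κ / κ)) +
          h ^ 2 * (t * (2 * (δ ^ (κ - 2 / α) / (-(κ - 2 / α)))))) := by
        rw [← ENNReal.ofReal_mul ht.le, ← ENNReal.ofReal_mul ht.le,
          ← ENNReal.ofReal_mul (by positivity), ← ENNReal.ofReal_add]
        · have : 0 ≤ δ ^ κ / κ := div_nonneg (Real.rpow_nonneg hδ0.le _) hκ0.le
          positivity
        · have : 0 ≤ δ ^ (κ - 2 / α) / (-(κ - 2 / α)) :=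
            div_nonneg (Real.rpow_nonneg hδ0.le _) (by linarith)
          positivity
    _ ≤ ENNReal.ofReal ((2 * t / κ + 2 * t / (2 / α - κ)) * h ^ (α * κ)) := by
        rw [key]
end
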